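/- arXiv:2605.00210 — 10 statements merged into one kernel-verified Lean document; each statement's English description precedes it below -/
import Mathlib

section
/- Let λ ∈ ℝ with |λ| ≥ 1, let d ≥ 1 and let A = J(λ,d) be the Jordan miniblock. Let N̄ ≥ 1, let L be an N̄ × N̄ real matrix, let n : Fin N̄ → ℕ satisfy 1 ≤ n i ≤ d for all i, let S be the associated block-diagonal selection matrix, and let k ∈ ℝ. Then the matrix M := S · ((I_{N̄} − k·L) ⊗ A) · Sᵀ is Schur stable if and only if for every complex eigenvalue μ of S · (L ⊗ I_d) · Sᵀ one has |1 − k·μ| < 1/|λ|. -/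
open Matrix Filter
open scoped Kronecker

/-- The `d × d` Jordan miniblock `J(λ,d)`: `λ` on the diagonal, `1` on the
superdiagonal, `0` elsewhere. -/
def jordanBlock (lam : ℝ) (d : ℕ) : Matrix (Fin d) (Fin d) ℝ :=
  Matrix.of fun i j => if i = j then lam else if (i : ℕ) + 1 = (j : ℕ) then 1 else 0

/-- The block-diagonal selection matrix `S = diag{S_1,…,S_N̄}` where
`S_i = [I_{n i}  0]` has size `n i × d`. -/
def selMatrix (d N : ℕ) (n : Fin N → ℕ) :
    Matrix (Σ i : Fin N, Fin (n i)) (Fin N × Fin d) ℝ :=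
  Matrix.of fun p q => if p.1 = q.1 ∧ (p.2 : ℕ) = (q.2 : ℕ) then 1 else 0

/-- A square real matrix is Schur stable if all of its complex eigenvalues have
modulus strictly less than one. -/
def SchurStable {m : Type} [Fintype m] [DecidableEq m] (M : Matrix m m ℝ) : Prop :=
  ∀ μ ∈ spectrum ℂ (M.map Complex.ofReal), ‖μ‖ < 1

section Aux

variable {d N : ℕ} {n : Fin N → ℕ}

/-- The embedding of selected indices into the full index set. -/
def embMap (hnd : ∀ i, n i ≤ d) : (Σ i : Fin N, Fin (n i)) → Fin N × Fin d :=
  fun p => (p.1, Fin.castLE (hnd p.1) p.2)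

lemma embMap_injective (hnd : ∀ i, n i ≤ d) : Function.Injective (embMap hnd) := by
  rintro ⟨i, a⟩ ⟨j, b⟩ h
  simp only [embMap, Prod.mk.injEq] at h
  obtain ⟨rfl, h2⟩ := h
  exact congrArg (Sigma.mk i) (Fin.castLE_injective _ h2)

lemma sel_conj (hnd : ∀ i, n i ≤ d) (X : Matrix (Fin N × Fin d) (Fin N × Fin d) ℝ) :
    selMatrix d N n * X * (selMatrix d N n)ᵀ = X.submatrix (embMap hnd) (embMap hnd) := by
  have hsel : ∀ (p : Σ i : Fin N, Fin (n i)) (u : Fin N × Fin d),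
      selMatrix d N n p u = if embMap hnd p = u then 1 else 0 := by
    intro p u
    simp only [selMatrix, embMap, Matrix.of_apply]
    congr 1
    simp only [Prod.ext_iff, eq_iff_iff]
    constructor
    · rintro ⟨h1, h2⟩; exact ⟨h1, Fin.ext h2⟩
    · rintro ⟨h1, h2⟩; exact ⟨h1, congrArg Fin.val h2⟩
  ext p q
  simp only [Matrix.mul_apply, Matrix.transpose_apply, hsel, Matrix.submatrix_apply,
    ite_mul, one_mul, zero_mul, mul_ite, mul_one, mul_zero]
  simp [Finset.sum_ite_eq]

lemma mem_spectrum_iff_det {ι : Type} [Fintype ι] [DecidableEq ι] (B : Matrix ι ι ℂ) (z : ℂ) :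
    z ∈ spectrum ℂ B ↔ (z • (1 : Matrix ι ι ℂ) - B).det = 0 := by
  rw [spectrum.mem_iff, Matrix.isUnit_iff_isUnit_det, isUnit_iff_ne_zero, not_ne_iff,
    Algebra.algebraMap_eq_smul_one]

lemma matrix_spectrum_nonempty {ι : Type} [Fintype ι] [DecidableEq ι] [Nonempty ι]
    (B : Matrix ι ι ℂ) : (spectrum ℂ B).Nonempty := by
  obtain ⟨μ, hμ⟩ := Module.End.exists_eigenvalue (Matrix.toLin' B)
  refine ⟨μ, ?_⟩
  rw [← AlgEquiv.spectrum_eq (Matrix.toLinAlgEquiv' (R := ℂ) (n := ι)) B]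
  exact Module.End.hasEigenvalue_iff_mem_spectrum.mp hμ

lemma jordan_lower (lam : ℝ) {x y : Fin d} (h : (y : ℕ) < (x : ℕ)) :
    jordanBlock lam d x y = 0 := by
  simp only [jordanBlock, Matrix.of_apply]
  rw [if_neg, if_neg]
  · omega
  · intro hxy
    exact absurd (congrArg Fin.val hxy) (by omega)

/-- The key determinant identity: conjugated Kronecker product with the Jordan block has the
same characteristic determinants as with `lam • 1`. -/
lemma det_level (hnd : ∀ i, n i ≤ d) (lam : ℝ) (C : Matrix (Fin N) (Fin N) ℂ) (z : ℂ) :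
    (z • (1 : Matrix (Σ i : Fin N, Fin (n i)) (Σ i : Fin N, Fin (n i)) ℂ) -
        ((C ⊗ₖ ((jordanBlock lam d).map Complex.ofReal)).submatrix (embMap hnd) (embMap hnd))).det
    = (z • 1 -
        (((lam : ℂ) • C ⊗ₖ (1 : Matrix (Fin d) (Fin d) ℂ)).submatrix (embMap hnd)
          (embMap hnd))).det := by
  classical
  set b : (Σ i : Fin N, Fin (n i)) → Fin d := fun p => Fin.castLE (hnd p.1) p.2 with hb
  have hne : ∀ p q : (Σ i : Fin N, Fin (n i)), b q < b p → p ≠ q := by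
    intro p q h heq
    subst heq
    exact lt_irrefl _ h
  have bt1 : BlockTriangular (z • (1 : Matrix (Σ i : Fin N, Fin (n i)) _ ℂ) -
      ((C ⊗ₖ ((jordanBlock lam d).map Complex.ofReal)).submatrix (embMap hnd) (embMap hnd))) b := by
    intro p q h
    have h1 : (1 : Matrix (Σ i : Fin N, Fin (n i)) _ ℂ) p q = 0 :=
      Matrix.one_apply_ne (hne p q h)
    have h2 : jordanBlock lam d (b p) (b q) = 0 := jordan_lower lam h
    simp [Matrix.sub_apply, Matrix.smul_apply, h1, Matrix.submatrix_apply,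
      Matrix.kroneckerMap_apply, embMap, ← hb, h2]
    exact Or.inr h2
  have bt2 : BlockTriangular (z • (1 : Matrix (Σ i : Fin N, Fin (n i)) _ ℂ) -
      (((lam : ℂ) • C ⊗ₖ (1 : Matrix (Fin d) (Fin d) ℂ)).submatrix (embMap hnd) (embMap hnd))) b := by
    intro p q h
    have h1 : (1 : Matrix (Σ i : Fin N, Fin (n i)) _ ℂ) p q = 0 :=
      Matrix.one_apply_ne (hne p q h)
    have h2 : (1 : Matrix (Fin d) (Fin d) ℂ) (b p) (b q) = 0 :=
      Matrix.one_apply_ne (ne_of_gt h)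
    simp [Matrix.sub_apply, Matrix.smul_apply, h1, Matrix.submatrix_apply,
      Matrix.kroneckerMap_apply, embMap, ← hb, h2]
    exact Or.inr (Or.inr h2)
  rw [bt1.det_fintype, bt2.det_fintype]
  refine Finset.prod_congr rfl fun a _ => ?_
  congr 1
  ext ⟨p, hp⟩ ⟨q, hq⟩
  simp only [Matrix.toSquareBlock_def, Matrix.of_apply, Matrix.sub_apply, Matrix.smul_apply,
    Matrix.submatrix_apply, Matrix.kroneckerMap_apply, Matrix.map_apply, embMap]
  have hbq : b p = b q := by rw [hp, hq]
  have hcast : Fin.castLE (hnd p.1) p.2 = Fin.castLE (hnd q.1) q.2 := hbq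
  rw [hcast]
  have hjd : jordanBlock lam d (Fin.castLE (hnd q.1) q.2) (Fin.castLE (hnd q.1) q.2) = lam := by
    simp [jordanBlock]
  rw [hjd]
  have h1d : (1 : Matrix (Fin d) (Fin d) ℂ) (Fin.castLE (hnd q.1) q.2)
      (Fin.castLE (hnd q.1) q.2) = 1 := Matrix.one_apply_eq _
  rw [h1d]
  simp only [smul_eq_mul]
  ring

end Aux

theorem stmt0 (lam : ℝ) (hlam : 1 ≤ |lam|) (d : ℕ) (hd : 1 ≤ d)
    (N : ℕ) (hN : 1 ≤ N) (L : Matrix (Fin N) (Fin N) ℝ)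
    (n : Fin N → ℕ) (hn1 : ∀ i, 1 ≤ n i) (hnd : ∀ i, n i ≤ d) (k : ℝ) :
    SchurStable (selMatrix d N n *
        (((1 : Matrix (Fin N) (Fin N) ℝ) - k • L) ⊗ₖ jordanBlock lam d) *
        (selMatrix d N n)ᵀ) ↔
      ∀ μ ∈ spectrum ℂ ((selMatrix d N n *
          (L ⊗ₖ (1 : Matrix (Fin d) (Fin d) ℝ)) * (selMatrix d N n)ᵀ).map Complex.ofReal),
        ‖1 - (k : ℂ) * μ‖ < 1 / |lam| := by
  classical
  have hlam0 : lam ≠ 0 := by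
    intro h; rw [h, abs_zero] at hlam; linarith
  have hlampos : (0 : ℝ) < |lam| := lt_of_lt_of_le one_pos hlam
  have hne : Nonempty (Σ i : Fin N, Fin (n i)) := ⟨⟨⟨0, hN⟩, ⟨0, hn1 _⟩⟩⟩
  set Lc : Matrix (Fin N) (Fin N) ℂ := L.map Complex.ofReal with hLc
  set P : Matrix (Σ i : Fin N, Fin (n i)) (Σ i : Fin N, Fin (n i)) ℂ :=
    ((Lc ⊗ₖ (1 : Matrix (Fin d) (Fin d) ℂ)).submatrix (embMap hnd) (embMap hnd)) with hP
  have hPmat : ((selMatrix d N n * (L ⊗ₖ (1 : Matrix (Fin d) (Fin d) ℝ)) *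
      (selMatrix d N n)ᵀ).map Complex.ofReal) = P := by
    rw [sel_conj hnd, hP, hLc, ← Matrix.submatrix_map]
    ext p q
    simp only [Matrix.submatrix_apply, Matrix.map_apply, Matrix.kroneckerMap_apply]
    rw [Matrix.one_apply, Matrix.one_apply]
    split_ifs <;> simp
  set Mc : Matrix (Σ i : Fin N, Fin (n i)) (Σ i : Fin N, Fin (n i)) ℂ :=
    ((((1 : Matrix (Fin N) (Fin N) ℂ) - (k:ℂ) • Lc) ⊗ₖ
      ((jordanBlock lam d).map Complex.ofReal)).submatrix (embMap hnd) (embMap hnd)) with hMc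
  have hMmat : ((selMatrix d N n *
      (((1 : Matrix (Fin N) (Fin N) ℝ) - k • L) ⊗ₖ jordanBlock lam d) *
      (selMatrix d N n)ᵀ).map Complex.ofReal) = Mc := by
    rw [sel_conj hnd, hMc, hLc, ← Matrix.submatrix_map]
    ext p q
    simp only [Matrix.submatrix_apply, Matrix.map_apply, Matrix.kroneckerMap_apply,
      Matrix.sub_apply, Matrix.smul_apply, smul_eq_mul]
    rw [Matrix.one_apply, Matrix.one_apply]
    split_ifs <;> push_cast <;> ring
  -- rewrite the smul-kronecker matrix as `lam • 1 - (lam*k) • P`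
  have hQ : ((lam : ℂ) • (((1 : Matrix (Fin N) (Fin N) ℂ) - (k:ℂ) • Lc) ⊗ₖ
      (1 : Matrix (Fin d) (Fin d) ℂ))).submatrix (embMap hnd) (embMap hnd)
      = (lam : ℂ) • (1 : Matrix (Σ i : Fin N, Fin (n i)) _ ℂ) - ((lam : ℂ) * k) • P := by
    ext p q
    simp only [Matrix.submatrix_apply, Matrix.kroneckerMap_apply, Matrix.sub_apply,
      Matrix.smul_apply, smul_eq_mul, hP]
    have hone : (1 : Matrix (Σ i : Fin N, Fin (n i)) _ ℂ) p q
        = (1 : Matrix (Fin N) (Fin N) ℂ) (embMap hnd p).1 (embMap hnd q).1 *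
          (1 : Matrix (Fin d) (Fin d) ℂ) (embMap hnd p).2 (embMap hnd q).2 := by
      rw [Matrix.one_apply, Matrix.one_apply, Matrix.one_apply]
      by_cases hpq : p = q
      · simp [hpq]
      · have : ¬(embMap hnd p = embMap hnd q) := fun h => hpq (embMap_injective hnd h)
        rw [if_neg hpq]
        rcases Decidable.em ((embMap hnd p).1 = (embMap hnd q).1) with h1 | h1
        · rcases Decidable.em ((embMap hnd p).2 = (embMap hnd q).2) with h2 | h2
          · exact absurd (Prod.ext h1 h2) this
          · simp [h1, h2]
        · simp [h1]
    rw [hone]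
    ring
  -- spectral characterization of Mc
  have hMspec : ∀ z : ℂ, z ∈ spectrum ℂ Mc ↔
      ((z - (lam : ℂ)) • (1 : Matrix (Σ i : Fin N, Fin (n i)) _ ℂ) +
        ((lam : ℂ) * k) • P).det = 0 := by
    intro z
    rw [mem_spectrum_iff_det, hMc, det_level hnd lam, hQ]
    have hEq : z • (1 : Matrix (Σ i : Fin N, Fin (n i)) _ ℂ) -
        ((lam : ℂ) • 1 - ((lam : ℂ) * k) • P)
        = (z - (lam : ℂ)) • 1 + ((lam : ℂ) * k) • P := by
      ext p q
      simp only [Matrix.sub_apply, Matrix.add_apply, Matrix.smul_apply, smul_eq_mul]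
      ring
    rw [hEq]
  have hPspec : ∀ w : ℂ, w ∈ spectrum ℂ P ↔ (w • (1 : Matrix (Σ i : Fin N, Fin (n i)) _ ℂ) - P).det = 0 :=
    fun w => mem_spectrum_iff_det P w
  rw [hPmat]
  unfold SchurStable
  rw [hMmat]
  by_cases hk : k = 0
  · -- both sides are false
    subst hk
    have hMc_spec : ((lam : ℂ)) ∈ spectrum ℂ Mc := by
      rw [hMspec]
      simp
    have hlhs : ¬ (∀ μ ∈ spectrum ℂ Mc, ‖μ‖ < 1) := by
      intro h
      have := h _ hMc_spec
      rw [Complex.norm_real, Real.norm_eq_abs] at this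
      linarith
    have hrhs : ¬ (∀ μ ∈ spectrum ℂ P, ‖1 - (0:ℝ) * μ‖ < 1 / |lam|) := by
      intro h
      obtain ⟨w, hw⟩ := matrix_spectrum_nonempty P
      have := h w hw
      simp only [Complex.ofReal_zero, zero_mul, sub_zero, norm_one] at this
      rw [lt_div_iff₀ hlampos, one_mul] at this
      linarith
    constructor
    · intro h; exact absurd h hlhs
    · intro h; exact absurd h hrhs
  · -- main case: k ≠ 0
    have hkc : (k : ℂ) ≠ 0 := Complex.ofReal_ne_zero.mpr hk
    have hlamc : (lam : ℂ) ≠ 0 := Complex.ofReal_ne_zero.mpr hlam0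
    have hc : (lam : ℂ) * k ≠ 0 := mul_ne_zero hlamc hkc
    have key : ∀ w : ℂ, ((lam : ℂ) * (1 - k * w)) ∈ spectrum ℂ Mc ↔ w ∈ spectrum ℂ P := by
      intro w
      rw [hMspec, hPspec]
      have heq : ((lam : ℂ) * (1 - k * w) - lam) • (1 : Matrix (Σ i : Fin N, Fin (n i)) _ ℂ) +
          ((lam : ℂ) * k) • P
          = (-((lam : ℂ) * k)) • (w • (1 : Matrix (Σ i : Fin N, Fin (n i)) _ ℂ) - P) := by
        ext p q
        simp only [Matrix.add_apply, Matrix.smul_apply, Matrix.sub_apply, smul_eq_mul]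
        ring
      rw [heq, Matrix.det_smul, mul_eq_zero]
      have : (-((lam : ℂ) * k)) ^ Fintype.card (Σ i : Fin N, Fin (n i)) ≠ 0 :=
        pow_ne_zero _ (neg_ne_zero.mpr hc)
      tauto
    constructor
    · intro hS μ hμ
      have hz := hS _ ((key μ).mpr hμ)
      rw [norm_mul, Complex.norm_real, Real.norm_eq_abs] at hz
      rw [lt_div_iff₀ hlampos]
      calc ‖1 - (k:ℂ) * μ‖ * |lam| = |lam| * ‖1 - (k:ℂ) * μ‖ := by ring
        _ < 1 := hz
    · intro hS z hz
      set w : ℂ := ((lam : ℂ) - z) / ((lam : ℂ) * k) with hw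
      have hzw : (lam : ℂ) * (1 - k * w) = z := by
        rw [hw]; field_simp
        ring
      have hwP : w ∈ spectrum ℂ P := by
        rw [← key w, hzw]; exact hz
      have := hS w hwP
      rw [lt_div_iff₀ hlampos] at this
      calc ‖z‖ = ‖(lam : ℂ) * (1 - k * w)‖ := by rw [hzw]
        _ = |lam| * ‖1 - (k:ℂ) * w‖ := by rw [norm_mul, Complex.norm_real, Real.norm_eq_abs]
        _ < 1 := by linarith [this]
end

section
/- Let λ ∈ ℝ, let d ≥ 1 and let A = J(λ,d) be the Jordan miniblock. Let N̄ ≥ 1, let L be an N̄ × N̄ real matrix, let n : Fin N̄ → ℕ satisfy 1 ≤ n i ≤ d for all i, let S be the associated block-diagonal selection matrix, and let k ∈ ℝ. Then the spectrum over ℂ of the matrix S · ((I_{N̄} − k·L) ⊗ A) · Sᵀ equals the set { λ·(1 − k·μ) : μ is a complex eigenvalue of S · (L ⊗ I_d) · Sᵀ }. -/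
open Matrix Filter
open scoped Kronecker

private lemma specDet {m : Type*} [Fintype m] [DecidableEq m] (M : Matrix m m ℂ) (μ : ℂ) :
    μ ∈ spectrum ℂ M ↔ (μ • (1 : Matrix m m ℂ) - M).det = 0 := by
  rw [spectrum.mem_iff, Algebra.algebraMap_eq_smul_one, Matrix.isUnit_iff_isUnit_det,
    isUnit_iff_ne_zero, not_ne_iff]

private lemma specNonempty {m : Type*} [Fintype m] [DecidableEq m] [Nonempty m]
    (M : Matrix m m ℂ) : (spectrum ℂ M).Nonempty := by
  obtain ⟨μ, hμ⟩ := Module.End.exists_eigenvalue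
      ((Matrix.toLinAlgEquiv (Pi.basisFun ℂ m)) M)
  exact ⟨μ, (AlgEquiv.spectrum_eq (Matrix.toLinAlgEquiv (Pi.basisFun ℂ m)) M) ▸ hμ.mem_spectrum⟩

private lemma sel_apply_eq {d N : ℕ} {n : Fin N → ℕ} (hnd : ∀ i, n i ≤ d)
    (p : Σ i : Fin N, Fin (n i)) (u : Fin N × Fin d) :
    selMatrix d N n p u =
      if ((⟨p.1, ⟨p.2.1, lt_of_lt_of_le p.2.2 (hnd p.1)⟩⟩ : Fin N × Fin d) = u) then 1 else 0 := by
  simp only [selMatrix, of_apply]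
  refine if_congr ?_ rfl rfl
  constructor
  · rintro ⟨h1, h2⟩
    obtain ⟨u1, u2⟩ := u
    dsimp at h1 h2 ⊢
    subst h1
    exact congrArg _ (Fin.ext h2)
  · rintro rfl
    exact ⟨rfl, rfl⟩

private lemma sel_conj_apply {d N : ℕ} {n : Fin N → ℕ} (hnd : ∀ i, n i ≤ d)
    (M : Matrix (Fin N) (Fin N) ℝ) (A : Matrix (Fin d) (Fin d) ℝ)
    (p q : Σ i : Fin N, Fin (n i)) :
    (selMatrix d N n * (M ⊗ₖ A) * (selMatrix d N n)ᵀ) p q =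
      M p.1 q.1 * A ⟨p.2.1, lt_of_lt_of_le p.2.2 (hnd p.1)⟩
        ⟨q.2.1, lt_of_lt_of_le q.2.2 (hnd q.1)⟩ := by
  have h2 : ∀ v : Fin N × Fin d, (selMatrix d N n * (M ⊗ₖ A)) p v =
      M p.1 v.1 * A ⟨p.2.1, lt_of_lt_of_le p.2.2 (hnd p.1)⟩ v.2 := by
    intro v
    rw [Matrix.mul_apply]
    simp only [sel_apply_eq hnd, ite_mul, one_mul, zero_mul]
    rw [Finset.sum_ite_eq]
    simp [Matrix.kroneckerMap_apply]
  rw [Matrix.mul_apply]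
  simp only [h2, Matrix.transpose_apply, sel_apply_eq hnd, mul_ite, mul_one, mul_zero]
  rw [Finset.sum_ite_eq]
  simp

theorem stmt1 (lam : ℝ) (d : ℕ) (hd : 1 ≤ d)
    (N : ℕ) (hN : 1 ≤ N) (L : Matrix (Fin N) (Fin N) ℝ)
    (n : Fin N → ℕ) (hn1 : ∀ i, 1 ≤ n i) (hnd : ∀ i, n i ≤ d) (k : ℝ) :
    spectrum ℂ ((selMatrix d N n *
        (((1 : Matrix (Fin N) (Fin N) ℝ) - k • L) ⊗ₖ jordanBlock lam d) *
        (selMatrix d N n)ᵀ).map Complex.ofReal) =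
      (fun μ : ℂ => (lam : ℂ) * (1 - (k : ℂ) * μ)) ''
        spectrum ℂ ((selMatrix d N n *
          (L ⊗ₖ (1 : Matrix (Fin d) (Fin d) ℝ)) * (selMatrix d N n)ᵀ).map Complex.ofReal) := by
  classical
  have hT : Nonempty (Σ i : Fin N, Fin (n i)) := ⟨⟨⟨0, hN⟩, ⟨0, hn1 _⟩⟩⟩
  set T := (Σ i : Fin N, Fin (n i)) with hTdef
  let b : T → Fin d := fun p => ⟨p.2.1, lt_of_lt_of_le p.2.2 (hnd p.1)⟩
  set M1 : Matrix T T ℂ := (selMatrix d N n *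
      (((1 : Matrix (Fin N) (Fin N) ℝ) - k • L) ⊗ₖ jordanBlock lam d) *
      (selMatrix d N n)ᵀ).map Complex.ofReal with hM1def
  set M2 : Matrix T T ℂ := (selMatrix d N n *
      (L ⊗ₖ (1 : Matrix (Fin d) (Fin d) ℝ)) * (selMatrix d N n)ᵀ).map Complex.ofReal with hM2def
  have hM1 : ∀ p q : T, M1 p q =
      ((((1 : Matrix (Fin N) (Fin N) ℝ) - k • L) p.1 q.1 : ℝ) : ℂ) *
        ((jordanBlock lam d (b p) (b q) : ℝ) : ℂ) := by
    intro p q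
    rw [hM1def, Matrix.map_apply, sel_conj_apply hnd, Complex.ofReal_mul]
  have hM2 : ∀ p q : T, M2 p q =
      ((L p.1 q.1 : ℝ) : ℂ) * (((1 : Matrix (Fin d) (Fin d) ℝ) (b p) (b q) : ℝ) : ℂ) := by
    intro p q
    rw [hM2def, Matrix.map_apply, sel_conj_apply hnd, Complex.ofReal_mul]
  -- jordan block vanishes below the diagonal
  have hjord : ∀ {i j : Fin d}, j < i → jordanBlock lam d i j = 0 := by
    intro i j h
    have h' : (j : ℕ) < (i : ℕ) := h
    simp only [jordanBlock, of_apply]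
    rw [if_neg (fun e => absurd (congrArg Fin.val e) (by omega)), if_neg (by omega)]
  -- block triangularity
  have hbt1 : ∀ x : ℂ, BlockTriangular (x • (1 : Matrix T T ℂ) - M1) b := by
    intro x p q hlt
    have hne : p ≠ q := fun e => absurd hlt (by rw [e]; exact lt_irrefl _)
    simp [Matrix.sub_apply, Matrix.smul_apply, Matrix.one_apply_ne hne, hM1 p q, hjord hlt]
  have hbt2 : ∀ x : ℂ, BlockTriangular (x • (1 : Matrix T T ℂ) - M2) b := by
    intro x p q hlt
    have hne : p ≠ q := fun e => absurd hlt (by rw [e]; exact lt_irrefl _)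
    have hbne : b p ≠ b q := hlt.ne'
    simp [Matrix.sub_apply, Matrix.smul_apply, Matrix.one_apply_ne hne, hM2 p q,
      Matrix.one_apply_ne hbne]
  have hσ1 : ∀ x : ℂ, x ∈ spectrum ℂ M1 ↔
      ∃ a ∈ Finset.univ.image b, ((x • (1 : Matrix T T ℂ) - M1).toSquareBlock b a).det = 0 := by
    intro x
    rw [specDet, (hbt1 x).det, Finset.prod_eq_zero_iff]
  have hσ2 : ∀ μ : ℂ, μ ∈ spectrum ℂ M2 ↔
      ∃ a ∈ Finset.univ.image b, ((μ • (1 : Matrix T T ℂ) - M2).toSquareBlock b a).det = 0 := by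
    intro μ
    rw [specDet, (hbt2 μ).det, Finset.prod_eq_zero_iff]
  -- within one block, sigma-equality is determined by the first component
  have hcoe : ∀ (a : Fin d) (p q : {y : T // b y = a}), ((p : T) = (q : T)) ↔ (p : T).1 = (q : T).1 := by
    intro a p q
    constructor
    · exact fun h => congrArg Sigma.fst h
    · obtain ⟨⟨i, u⟩, hp⟩ := p
      obtain ⟨⟨j, v⟩, hq⟩ := q
      dsimp
      rintro rfl
      have hu : (u : ℕ) = (a : ℕ) := congrArg Fin.val hp
      have hv : (v : ℕ) = (a : ℕ) := congrArg Fin.val hq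
      exact congrArg (Sigma.mk i) (Fin.ext (by rw [hu, hv]))
  -- key block identity
  have hblk : ∀ (a : Fin d) (x μ : ℂ), x = (lam : ℂ) * (1 - (k : ℂ) * μ) →
      (x • (1 : Matrix T T ℂ) - M1).toSquareBlock b a =
        (-((lam : ℂ) * (k : ℂ))) • ((μ • (1 : Matrix T T ℂ) - M2).toSquareBlock b a) := by
    intro a x μ hx
    ext p q
    have hbp : b (p : T) = a := p.2
    have hbq : b (q : T) = a := q.2
    have hja : jordanBlock lam d (b (p : T)) (b (q : T)) = lam := by
      rw [hbp, hbq]; simp [jordanBlock]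
    have hia : ((1 : Matrix (Fin d) (Fin d) ℝ) (b (p : T)) (b (q : T)) : ℝ) = 1 := by
      rw [hbp, hbq, Matrix.one_apply_eq]
    simp only [Matrix.toSquareBlock_def, Matrix.of_apply, Matrix.smul_apply, Matrix.sub_apply,
      Matrix.one_apply, hM1, hM2, smul_eq_mul, hbp, hbq, if_pos rfl, hja, hia]
    simp only [jordanBlock, Matrix.of_apply, if_pos rfl]
    rw [if_congr (hcoe a p q) rfl rfl]
    subst hx
    by_cases h : ((p : T)).1 = ((q : T)).1 <;>
      simp only [h, eq_self_iff_true, if_true, if_false, ite_true, ite_false,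
        eq_iff_iff, iff_true, iff_false] <;>
      push_cast <;> ring
  by_cases hlk : (lam : ℂ) * (k : ℂ) = 0
  · -- degenerate case: `lam * k = 0`, both sides are `{lam}`
    have hblk0 : ∀ (a : Fin d) (x : ℂ),
        (x • (1 : Matrix T T ℂ) - M1).toSquareBlock b a =
          (x - (lam : ℂ)) • (1 : Matrix {y : T // b y = a} {y : T // b y = a} ℂ) := by
      intro a x
      ext p q
      have hbp : b (p : T) = a := p.2
      have hbq : b (q : T) = a := q.2
      have hja : jordanBlock lam d (b (p : T)) (b (q : T)) = lam := by
        rw [hbp, hbq]; simp [jordanBlock]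
      simp only [Matrix.toSquareBlock_def, Matrix.of_apply, Matrix.smul_apply, Matrix.sub_apply,
        Matrix.one_apply, hM1, smul_eq_mul, hja]
      rw [if_congr (hcoe a p q) rfl rfl]
      have hpq : (p = q) = (((p : T)).1 = ((q : T)).1) :=
        propext ((Subtype.coe_injective.eq_iff).symm.trans (hcoe a p q))
      by_cases h : ((p : T)).1 = ((q : T)).1
      · simp only [hpq, h, eq_self_iff_true, if_true, ite_true, eq_iff_iff, iff_true]
        push_cast
        linear_combination ((L ((q : T)).1 ((q : T)).1 : ℝ) : ℂ) * hlk
      · simp only [hpq, h, if_false, ite_false, eq_iff_iff, iff_false]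
        push_cast
        linear_combination ((L ((p : T)).1 ((q : T)).1 : ℝ) : ℂ) * hlk
    have hcard : ∀ a ∈ Finset.univ.image b, Fintype.card {y : T // b y = a} ≠ 0 := by
      intro a ha
      obtain ⟨p, -, hp⟩ := Finset.mem_image.mp ha
      have : Nonempty {y : T // b y = a} := ⟨⟨p, hp⟩⟩
      exact Fintype.card_ne_zero
    have h1 : spectrum ℂ M1 = {(lam : ℂ)} := by
      ext x
      rw [hσ1]
      simp only [Set.mem_singleton_iff]
      constructor
      · rintro ⟨a, ha, h0⟩
        rw [hblk0 a x, Matrix.det_smul, Matrix.det_one, mul_one] at h0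
        exact sub_eq_zero.mp ((pow_eq_zero_iff (hcard a ha)).mp h0)
      · rintro rfl
        obtain ⟨t⟩ := hT
        refine ⟨b t, Finset.mem_image_of_mem b (Finset.mem_univ t), ?_⟩
        rw [hblk0, Matrix.det_smul, Matrix.det_one, mul_one, sub_self,
          zero_pow (hcard _ (Finset.mem_image_of_mem b (Finset.mem_univ t)))]
    have h2 : ∀ μ : ℂ, (lam : ℂ) * (1 - (k : ℂ) * μ) = (lam : ℂ) := by
      intro μ; linear_combination (-μ) * hlk
    rw [h1]
    obtain ⟨μ0, hμ0⟩ := specNonempty M2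
    ext x
    simp only [Set.mem_singleton_iff, Set.mem_image]
    constructor
    · rintro rfl; exact ⟨μ0, hμ0, h2 μ0⟩
    · rintro ⟨μ, hμ, rfl⟩; exact h2 μ
  · -- main case: `lam * k ≠ 0`
    ext x
    simp only [Set.mem_image]
    constructor
    · intro hx
      obtain ⟨a, ha, h0⟩ := (hσ1 x).mp hx
      set μ : ℂ := ((lam : ℂ) - x) / ((lam : ℂ) * (k : ℂ)) with hμdef
      have hxeq : x = (lam : ℂ) * (1 - (k : ℂ) * μ) := by
        rw [hμdef]; field_simp [left_ne_zero_of_mul hlk, right_ne_zero_of_mul hlk]; ring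
      refine ⟨μ, ?_, hxeq.symm⟩
      rw [hblk a x μ hxeq, Matrix.det_smul, mul_eq_zero] at h0
      rcases h0 with h0 | h0
      · exact absurd h0 (pow_ne_zero _ (neg_ne_zero.mpr hlk))
      · exact (hσ2 μ).mpr ⟨a, ha, h0⟩
    · rintro ⟨μ, hμ, rfl⟩
      obtain ⟨a, ha, h2⟩ := (hσ2 μ).mp hμ
      refine (hσ1 _).mpr ⟨a, ha, ?_⟩
      rw [hblk a _ μ rfl, Matrix.det_smul, h2, mul_zero]
end

section
/- Let d ≥ 1, let N̄ ≥ 1, let L be an N̄ × N̄ real matrix, let n : Fin N̄ → ℕ satisfy 1 ≤ n i ≤ d for all i, and let S be the associated block-diagonal selection matrix. Then the spectrum over ℂ of S · (L ⊗ I_d) · Sᵀ equals the union, over i ∈ {1,…,d}, of the spectra over ℂ of the principal submatrices of L obtained by keeping exactly the rows and columns indexed by { j : n j ≥ i } (the spectrum of an empty matrix being the empty set). -/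
open Matrix Filter
open scoped Kronecker

lemma mem_spec_iff_det {m : Type} [Fintype m] [DecidableEq m] (A : Matrix m m ℂ) (μ : ℂ) :
    μ ∈ spectrum ℂ A ↔ (algebraMap ℂ (Matrix m m ℂ) μ - A).det = 0 := by
  rw [spectrum.mem_iff, Matrix.isUnit_iff_isUnit_det, isUnit_iff_ne_zero, not_not]

lemma det_blockDiagonal'' {o : Type} [Fintype o] [DecidableEq o] [LinearOrder o]
    {m' : o → Type} [∀ i, Fintype (m' i)] [∀ i, DecidableEq (m' i)]
    {R : Type} [CommRing R] (M : ∀ i, Matrix (m' i) (m' i) R) :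
    (Matrix.blockDiagonal' M).det = ∏ i, (M i).det := by
  have hbt : (Matrix.blockDiagonal' M).BlockTriangular Sigma.fst := by
    rintro ⟨k, i⟩ ⟨k', j⟩ h
    exact Matrix.blockDiagonal'_apply_ne M i j h.ne'
  rw [hbt.det_fintype]
  refine Finset.prod_congr rfl fun a _ => ?_
  let eqv : m' a ≃ {p : Σ k : o, m' k // p.1 = a} :=
    { toFun := fun i => ⟨⟨a, i⟩, rfl⟩
      invFun := fun p => (congrArg m' p.2) ▸ p.1.2
      left_inv := fun i => rfl
      right_inv := fun p => by rcases p with ⟨⟨k, i⟩, rfl⟩; rfl }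
  have key : ((Matrix.blockDiagonal' M).toSquareBlock Sigma.fst a).submatrix eqv eqv = M a := by
    ext i j
    simp [Matrix.toSquareBlock_def, eqv, Matrix.blockDiagonal'_apply_eq]
  rw [← key, Matrix.det_submatrix_equiv_self]

/-- The grouping equivalence. -/
def blkEquiv (d N : ℕ) (n : Fin N → ℕ) (hnd : ∀ i, n i ≤ d) :
    (Σ i : Fin N, Fin (n i)) ≃ Σ m : (Finset.Icc 1 d), {j : Fin N // (m : ℕ) ≤ n j} where
  toFun p := ⟨⟨(p.2 : ℕ) + 1, by
      rw [Finset.mem_Icc]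
      exact ⟨Nat.le_add_left 1 _, Nat.succ_le_of_lt (lt_of_lt_of_le p.2.isLt (hnd p.1))⟩⟩,
    ⟨p.1, p.2.isLt⟩⟩
  invFun q := ⟨q.2.1, ⟨(q.1 : ℕ) - 1, by
      have h1 : 1 ≤ (q.1 : ℕ) := (Finset.mem_Icc.mp q.1.2).1
      have h2 := q.2.2
      omega⟩⟩
  left_inv p := rfl
  right_inv q := by
    rcases q with ⟨⟨m, hm⟩, j⟩
    have h1 : 1 ≤ m := (Finset.mem_Icc.mp hm).1
    obtain ⟨m', rfl⟩ : ∃ m', m = m' + 1 := ⟨m - 1, by omega⟩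
    rfl

theorem stmt2 (d : ℕ) (hd : 1 ≤ d)
    (N : ℕ) (hN : 1 ≤ N) (L : Matrix (Fin N) (Fin N) ℝ)
    (n : Fin N → ℕ) (hn1 : ∀ i, 1 ≤ n i) (hnd : ∀ i, n i ≤ d) :
    spectrum ℂ ((selMatrix d N n *
        (L ⊗ₖ (1 : Matrix (Fin d) (Fin d) ℝ)) * (selMatrix d N n)ᵀ).map Complex.ofReal) =
      ⋃ i ∈ Finset.Icc 1 d,
        spectrum ℂ ((L.submatrix (fun x : {j : Fin N // i ≤ n j} => (x : Fin N))
          (fun x : {j : Fin N // i ≤ n j} => (x : Fin N))).map Complex.ofReal) := by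
  classical
  set M : Matrix (Σ i : Fin N, Fin (n i)) (Σ i : Fin N, Fin (n i)) ℝ :=
    Matrix.of fun p q => if (p.2 : ℕ) = (q.2 : ℕ) then L p.1 q.1 else 0 with hMdef
  -- Step 1: entrywise formula for the product
  have hS : ∀ (p : Σ i : Fin N, Fin (n i)) (x : Fin N × Fin d),
      selMatrix d N n p x = if x = (p.1, (p.2).castLE (hnd p.1)) then 1 else 0 := by
    intro p x
    simp only [selMatrix, Matrix.of_apply]
    refine if_congr ?_ rfl rfl
    rw [Prod.ext_iff]
    simp only [Fin.ext_iff, Fin.coe_castLE]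
    omega
  have hprod : selMatrix d N n * (L ⊗ₖ (1 : Matrix (Fin d) (Fin d) ℝ)) * (selMatrix d N n)ᵀ
      = M := by
    ext p q
    simp only [Matrix.mul_apply, hS, Matrix.transpose_apply, boole_mul, mul_boole, ite_mul,
      zero_mul, Finset.sum_ite_eq, Finset.sum_ite_eq', Finset.mem_univ, if_true, hMdef,
      Fintype.sum_prod_type, Prod.mk.injEq, ite_and,
      Matrix.of_apply, kroneckerMap_apply, Matrix.one_apply, mul_ite, mul_one, mul_zero]
    rw [one_mul]
    refine if_congr ?_ rfl rfl
    simp only [Fin.ext_iff, Fin.coe_castLE]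
    omega
  rw [hprod]
  -- Step 2: reindexing M gives a block diagonal matrix
  set e := blkEquiv d N n hnd with he
  set B : (m : (Finset.Icc 1 d)) → Matrix {j : Fin N // (m : ℕ) ≤ n j} {j : Fin N // (m : ℕ) ≤ n j} ℝ :=
    fun m => L.submatrix Subtype.val Subtype.val with hB
  have hre : M.submatrix e.symm e.symm = Matrix.blockDiagonal' B := by
    ext ⟨m, i⟩ ⟨m', j⟩
    by_cases h : m = m'
    · subst h
      rw [Matrix.blockDiagonal'_apply_eq]
      simp [hMdef, hB, he, blkEquiv]
    · rw [Matrix.blockDiagonal'_apply_ne _ _ _ h]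
      have hm : 1 ≤ (m : ℕ) := (Finset.mem_Icc.mp m.2).1
      have hm' : 1 ≤ (m' : ℕ) := (Finset.mem_Icc.mp m'.2).1
      have hne : (m : ℕ) - 1 ≠ (m' : ℕ) - 1 := by
        intro hc
        exact h (Subtype.ext (by omega))
      simp [hMdef, he, blkEquiv, hne]
  -- Step 3: spectra via determinants
  ext μ
  rw [mem_spec_iff_det]
  have hdet : (algebraMap ℂ _ μ - M.map Complex.ofReal).det
      = ∏ m : (Finset.Icc 1 d), (algebraMap ℂ
        (Matrix {j : Fin N // (m : ℕ) ≤ n j} {j : Fin N // (m : ℕ) ≤ n j} ℂ) μ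
        - (B m).map Complex.ofReal).det := by
    rw [← Matrix.det_submatrix_equiv_self e.symm]
    have h1 : (algebraMap ℂ _ μ - M.map Complex.ofReal).submatrix e.symm e.symm
        = algebraMap ℂ _ μ - (M.submatrix e.symm e.symm).map Complex.ofReal := by
      ext a b
      simp [Matrix.submatrix_apply, Matrix.sub_apply, Matrix.map_apply,
        Algebra.algebraMap_eq_smul_one, Matrix.smul_apply, Matrix.one_apply, smul_eq_mul,
        EmbeddingLike.apply_eq_iff_eq]
    rw [h1, hre, Matrix.blockDiagonal'_map _ _ Complex.ofReal_zero]
    have h2 : (algebraMap ℂ (Matrix (Σ m : (Finset.Icc 1 d), {j : Fin N // (m : ℕ) ≤ n j})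
          (Σ m : (Finset.Icc 1 d), {j : Fin N // (m : ℕ) ≤ n j}) ℂ) μ)
        = Matrix.blockDiagonal' (fun m : (Finset.Icc 1 d) => algebraMap ℂ
            (Matrix {j : Fin N // (m : ℕ) ≤ n j} {j : Fin N // (m : ℕ) ≤ n j} ℂ) μ) := by
      rw [Algebra.algebraMap_eq_smul_one]
      have h3 : (fun m : (Finset.Icc 1 d) => algebraMap ℂ
            (Matrix {j : Fin N // (m : ℕ) ≤ n j} {j : Fin N // (m : ℕ) ≤ n j} ℂ) μ)
          = μ • (fun m : (Finset.Icc 1 d) =>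
            (1 : Matrix {j : Fin N // (m : ℕ) ≤ n j} {j : Fin N // (m : ℕ) ≤ n j} ℂ)) := by
        funext m
        rw [Pi.smul_apply, Algebra.algebraMap_eq_smul_one]
      rw [h3, Matrix.blockDiagonal'_smul]
      exact congrArg (μ • ·) (Matrix.blockDiagonal'_one).symm
    rw [h2, ← Matrix.blockDiagonal'_sub, det_blockDiagonal'']
    rfl
  rw [hdet, Finset.prod_eq_zero_iff]
  simp only [Set.mem_iUnion, Finset.mem_univ, true_and]
  constructor
  · rintro ⟨m, hm⟩
    exact ⟨(m : ℕ), m.2, (mem_spec_iff_det _ _).mpr hm⟩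
  · rintro ⟨i, hi, hμ⟩
    exact ⟨⟨i, hi⟩, (mem_spec_iff_det _ _).mp hμ⟩
end

section
/- Let λ ∈ ℝ with |λ| ≥ 1, let d ≥ 1 and let A = J(λ,d) be the Jordan miniblock. Let N̄ ≥ 1, let L be an N̄ × N̄ real matrix and let k ∈ ℝ. Then the matrix (I_{N̄} − k·L) ⊗ A is Schur stable if and only if for every complex eigenvalue μ of L one has |1 − k·μ| < 1/|λ|. -/
open Matrix Filter
open scoped Pointwise
open scoped Kronecker

open Polynomial in
lemma mem_spectrum_iff_root {n : Type} [Fintype n] [DecidableEq n]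
    (M : Matrix n n ℂ) (μ : ℂ) : μ ∈ spectrum ℂ M ↔ M.charpoly.eval μ = 0 := by
  rw [spectrum.mem_iff, Matrix.isUnit_iff_isUnit_det, isUnit_iff_ne_zero, not_not]
  have h : (Matrix.charpoly M).eval μ = ((algebraMap ℂ (Matrix n n ℂ)) μ - M).det := by
    rw [Matrix.charpoly, ← Polynomial.coe_evalRingHom, RingHom.map_det]
    congr 1
    ext i j
    by_cases hij : i = j <;>
      simp [hij, Matrix.charmatrix_apply, Matrix.algebraMap_matrix_apply,
        Matrix.diagonal_apply]
  rw [h]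

lemma blocks_charpoly {N d : ℕ} [instd : DecidableEq (Fin d)]
    [instS : ∀ a : Fin d, Fintype {p : Fin d × Fin N // p.1 = a}]
    [instSd : ∀ a : Fin d, DecidableEq {p : Fin d × Fin N // p.1 = a}]
    (A : Matrix (Fin N) (Fin N) ℂ) (lam : ℂ) (J : Matrix (Fin d) (Fin d) ℂ)
    (hJdiag : ∀ j, J j j = lam) (hN : 0 < N) :
    (∏ a ∈ Finset.image (fun p : Fin d × Fin N => p.1) Finset.univ,
      ((J ⊗ₖ A).toSquareBlock (fun p => p.1) a).charpoly) = (lam • A).charpoly ^ d := by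
  have himg : Finset.image (fun p : Fin d × Fin N => p.1) Finset.univ = Finset.univ := by
    apply Finset.eq_univ_of_forall
    intro a
    exact Finset.mem_image.mpr ⟨(a, ⟨0, hN⟩), Finset.mem_univ _, rfl⟩
  have hblk : ∀ a : Fin d,
      ((J ⊗ₖ A).toSquareBlock (fun p => p.1) a).charpoly = (lam • A).charpoly := by
    intro a
    rw [← Matrix.charpoly_reindex
      (show {p : Fin d × Fin N // p.1 = a} ≃ Fin N from
        ⟨fun p => p.1.2, fun i => ⟨(a, i), rfl⟩,
         by rintro ⟨⟨x, i⟩, rfl⟩; rfl, fun i => rfl⟩)]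
    congr 1
    ext i j
    show (J ⊗ₖ A) (a, i) (a, j) = (lam • A) i j
    rw [Matrix.kroneckerMap_apply, hJdiag a, Matrix.smul_apply, smul_eq_mul]
  rw [himg, Finset.prod_congr rfl fun a _ => hblk a, Finset.prod_const,
    Finset.card_univ, Fintype.card_fin]

lemma kron_charpoly {N d : ℕ} (A : Matrix (Fin N) (Fin N) ℂ) (lam : ℂ)
    (J : Matrix (Fin d) (Fin d) ℂ) (hJdiag : ∀ j, J j j = lam)
    (hJlow : ∀ i j : Fin d, j < i → J i j = 0) (hN : 0 < N) :
    (A ⊗ₖ J).charpoly = (lam • A).charpoly ^ d := by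
  have h1 : (A ⊗ₖ J).charpoly = (J ⊗ₖ A).charpoly := by
    rw [← Matrix.charpoly_reindex (Equiv.prodComm (Fin N) (Fin d)) (A ⊗ₖ J)]
    congr 1
    ext ⟨j, i⟩ ⟨j', i'⟩
    simp [Matrix.kroneckerMap_apply, mul_comm]
  rw [h1]
  have hbt : (J ⊗ₖ A).BlockTriangular (fun p => p.1) := by
    intro p q h
    simp only [Matrix.kroneckerMap_apply]
    rw [hJlow _ _ h, zero_mul]
  rw [hbt.charpoly]
  have key := @blocks_charpoly N d
    (fun a b => @LinearOrder.toDecidableEq (Fin d) (Fin.instLinearOrder) a b)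
    (fun a => @Subtype.fintype _ (fun p : Fin d × Fin N => p.1 = a)
      (fun p => @LinearOrder.toDecidableEq (Fin d) (Fin.instLinearOrder) p.1 a)
      (@instFintypeProd (Fin d) (Fin N) (Fin.fintype d) (Fin.fintype N)))
    (fun a => fun x y => @Subtype.instDecidableEq (Fin d × Fin N) (fun p => p.1 = a)
      (fun a b => @instDecidableEqProd (Fin d) (Fin N) (instDecidableEqFin d) (instDecidableEqFin N) a b) x y)
    A lam J hJdiag hN
  with_reducible exact key

theorem stmt3 (lam : ℝ) (hlam : 1 ≤ |lam|) (d : ℕ) (hd : 1 ≤ d)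
    (N : ℕ) (hN : 1 ≤ N) (L : Matrix (Fin N) (Fin N) ℝ) (k : ℝ) :
    SchurStable (((1 : Matrix (Fin N) (Fin N) ℝ) - k • L) ⊗ₖ jordanBlock lam d) ↔
      ∀ μ ∈ spectrum ℂ (L.map Complex.ofReal),
        ‖(1 - (k : ℂ) * μ)‖ < 1 / |lam| := by
  haveI : NeZero N := ⟨by omega⟩
  have hlam0 : (lam : ℂ) ≠ 0 := by
    simp only [ne_eq, Complex.ofReal_eq_zero]
    intro h
    rw [h] at hlam
    norm_num at hlam
  set Lc : Matrix (Fin N) (Fin N) ℂ := L.map Complex.ofReal with hLc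
  set Ac : Matrix (Fin N) (Fin N) ℂ :=
    (1 : Matrix (Fin N) (Fin N) ℂ) - (k : ℂ) • Lc with hAc
  set Jc : Matrix (Fin d) (Fin d) ℂ := (jordanBlock lam d).map Complex.ofReal with hJc
  -- the complexified matrix is the Kronecker product of the complexifications
  have hmap : (((1 : Matrix (Fin N) (Fin N) ℝ) - k • L) ⊗ₖ jordanBlock lam d).map
      Complex.ofReal = Ac ⊗ₖ Jc := by
    ext ⟨i, j⟩ ⟨i', j'⟩
    by_cases h : i = i' <;>
      simp [Matrix.kroneckerMap_apply, Matrix.map_apply, hAc, hLc, hJc,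
        Matrix.one_apply, Matrix.sub_apply, Matrix.smul_apply, h, sub_mul, mul_comm]
  -- properties of Jc
  have hJdiag : ∀ j : Fin d, Jc j j = (lam : ℂ) := by
    intro j; simp [hJc, jordanBlock, Matrix.map_apply]
  have hJlow : ∀ i j : Fin d, j < i → Jc i j = 0 := by
    intro i j hij
    have h1 : i ≠ j := (ne_of_gt hij)
    have h2 : (i : ℕ) + 1 ≠ (j : ℕ) := by omega
    simp [hJc, jordanBlock, Matrix.map_apply, h1, h2]
  have hcp := kron_charpoly Ac (lam : ℂ) Jc hJdiag hJlow (by omega : 0 < N)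
  -- spectrum of the Kronecker product equals spectrum of lam • Ac
  have hspec : spectrum ℂ (Ac ⊗ₖ Jc) = spectrum ℂ ((lam : ℂ) • Ac) := by
    ext μ
    rw [mem_spectrum_iff_root, mem_spectrum_iff_root, hcp, Polynomial.eval_pow,
      pow_eq_zero_iff (by omega : d ≠ 0)]
  -- spectrum of lam • Ac via scaling
  have hsmul : spectrum ℂ ((lam : ℂ) • Ac) = (lam : ℂ) • spectrum ℂ Ac := by
    simpa using spectrum.unit_smul_eq_smul Ac (Units.mk0 (lam : ℂ) hlam0)
  -- spectrum of Ac = {1} - k • spectrum Lc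
  have hnonempty : (spectrum ℂ Lc).Nonempty :=
    spectrum.nonempty_of_isAlgClosed_of_finiteDimensional ℂ Lc
  have hksmul : spectrum ℂ ((k : ℂ) • Lc) = (k : ℂ) • spectrum ℂ Lc :=
    spectrum.smul_eq_smul (k : ℂ) Lc hnonempty
  have hsub : spectrum ℂ Ac = {(1 : ℂ)} - (k : ℂ) • spectrum ℂ Lc := by
    have h0 := spectrum.singleton_sub_eq ((k : ℂ) • Lc) (1 : ℂ)
    rw [_root_.map_one] at h0
    rw [hAc, ← h0, hksmul]
  unfold SchurStable
  rw [hmap, hspec, hsmul, hsub]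
  have habs : (0 : ℝ) < |lam| := lt_of_lt_of_le one_pos hlam
  constructor
  · intro h μ hμ
    have hmem : (lam : ℂ) * (1 - (k : ℂ) * μ) ∈
        (lam : ℂ) • ({(1 : ℂ)} - (k : ℂ) • spectrum ℂ Lc) := by
      refine Set.smul_mem_smul_set ?_
      exact Set.sub_mem_sub rfl (Set.smul_mem_smul_set hμ)
    have := h _ hmem
    rw [norm_mul, Complex.norm_real, Real.norm_eq_abs] at this
    rw [lt_div_iff₀ habs]
    calc ‖(1 - (k : ℂ) * μ)‖ * |lam|
        = |lam| * ‖(1 - (k : ℂ) * μ)‖ := mul_comm _ _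
      _ < 1 := this
  · intro h ν hν
    obtain ⟨z, hz, rfl⟩ := hν
    obtain ⟨x, hx, y, hy, rfl⟩ := hz
    obtain ⟨μ, hμ, rfl⟩ := hy
    rw [Set.mem_singleton_iff] at hx
    subst hx
    have := h μ hμ
    rw [lt_div_iff₀ habs] at this
    calc ‖((lam : ℂ) • ((1 : ℂ) - (k : ℂ) • μ))‖
        = ‖(1 - (k : ℂ) * μ)‖ * |lam| := by
          rw [smul_eq_mul, smul_eq_mul, norm_mul, Complex.norm_real, Real.norm_eq_abs, mul_comm]
      _ < 1 := this
end

section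
/- Let λ ∈ ℝ with |λ| ≥ 1, let N̄ ≥ 1, let L be an N̄ × N̄ real matrix that is symmetric and positive definite, and let μ_m and μ_M denote respectively the smallest and largest (real) eigenvalue of L, so that 0 < μ_m ≤ μ_M. Then for k ∈ ℝ, the matrix λ·(I_{N̄} − k·L) is Schur stable if and only if (1/μ_m)·(1 − 1/|λ|) < k < (1/μ_M)·(1 + 1/|λ|). -/
open Matrix Filter
open scoped Kronecker

lemma mem_spec_det {𝕜 : Type} [Field 𝕜] {n : Type} [Fintype n] [DecidableEq n]
    (A : Matrix n n 𝕜) (x : 𝕜) :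
    x ∈ spectrum 𝕜 A ↔ (x • (1 : Matrix n n 𝕜) - A).det = 0 := by
  rw [spectrum.mem_iff, Matrix.isUnit_iff_isUnit_det, isUnit_iff_ne_zero, not_ne_iff,
    Algebra.algebraMap_eq_smul_one]

lemma det_map_ofReal {n : Type} [Fintype n] [DecidableEq n] (B : Matrix n n ℝ) :
    (B.map Complex.ofReal).det = Complex.ofReal B.det :=
  (RingHom.map_det Complex.ofRealHom B).symm

lemma spec_real {n : Type} [Fintype n] [DecidableEq n] {A : Matrix n n ℂ}
    (hA : A.IsHermitian) :
    spectrum ℂ A = Set.range (fun i => (hA.eigenvalues i : ℂ)) := by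
  rw [hA.spectrum_eq_image_range, ← Set.range_comp]
  rfl

theorem stmt6' (lam : ℝ) (hlam : 1 ≤ |lam|)
    (N : ℕ) (hN : 1 ≤ N) (L : Matrix (Fin N) (Fin N) ℝ)
    (hsymm : L.IsSymm) (hpd : L.PosDef)
    (μm μM : ℝ) (hμm : IsLeast (spectrum ℝ L) μm) (hμM : IsGreatest (spectrum ℝ L) μM)
    (k : ℝ) :
    (∀ μ ∈ spectrum ℂ ((lam • ((1 : Matrix (Fin N) (Fin N) ℝ) - k • L)).map Complex.ofReal),
      ‖μ‖ < 1) ↔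
      (1 / μm) * (1 - 1 / |lam|) < k ∧ k < (1 / μM) * (1 + 1 / |lam|) := by
  have hl : (0:ℝ) < |lam| := lt_of_lt_of_le one_pos hlam
  have hlam0 : lam ≠ 0 := fun h => by simp [h] at hl
  set L' : Matrix (Fin N) (Fin N) ℂ := L.map Complex.ofReal with hL'def
  set M' : Matrix (Fin N) (Fin N) ℂ :=
    (lam • ((1 : Matrix (Fin N) (Fin N) ℝ) - k • L)).map Complex.ofReal with hM'def
  have hL' : L'.IsHermitian := by
    ext i j
    simp only [hL'def, conjTranspose_apply, Matrix.map_apply, Complex.star_def,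
      Complex.conj_ofReal, Complex.ofReal_inj]
    exact congrFun (congrFun hsymm i) j
  -- key matrix identity
  have hkey : ∀ y : ℂ, ((lam : ℂ) - lam * k * y) • (1 : Matrix (Fin N) (Fin N) ℂ) - M'
      = (-(lam * k) : ℂ) • (y • (1 : Matrix (Fin N) (Fin N) ℂ) - L') := by
    intro y
    ext i j
    by_cases h : i = j <;>
      simp [h, Matrix.one_apply, Matrix.map_apply, Matrix.sub_apply, Matrix.smul_apply,
        hM'def, hL'def] <;> push_cast <;> ring
  have hmem : ∀ y : ℂ, ((lam : ℂ) - lam * k * y) ∈ spectrum ℂ M' ↔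
      (-(lam * k) : ℂ) ^ N * (y • (1 : Matrix (Fin N) (Fin N) ℂ) - L').det = 0 := by
    intro y
    rw [mem_spec_det, hkey, Matrix.det_smul, Fintype.card_fin]
  -- transfer of real spectrum
  have htrans : ∀ t : ℝ, t ∈ spectrum ℝ L ↔
      ((t : ℂ) • (1 : Matrix (Fin N) (Fin N) ℂ) - L').det = 0 := by
    intro t
    rw [mem_spec_det]
    have hmap : (t • (1 : Matrix (Fin N) (Fin N) ℝ) - L).map Complex.ofReal
        = (t : ℂ) • (1 : Matrix (Fin N) (Fin N) ℂ) - L' := by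
      ext i j
      by_cases h : i = j <;>
        simp [h, Matrix.one_apply, Matrix.map_apply, Matrix.sub_apply, Matrix.smul_apply, hL'def]
    rw [← hmap, det_map_ofReal]
    exact_mod_cast Iff.rfl
  -- positivity of eigenvalues
  have hμmpos : 0 < μm := by
    have h1 := hμm.1
    rw [Matrix.IsHermitian.spectrum_real_eq_range_eigenvalues hpd.isHermitian] at h1
    obtain ⟨i, hi⟩ := h1
    rw [← hi]
    exact hpd.eigenvalues_pos i
  have hμMpos : 0 < μM := lt_of_lt_of_le hμmpos (hμM.2 hμm.1)
  have hinv : 1 / |lam| ≤ 1 := by rw [div_le_one hl]; exact hlam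
  have hcancel : |lam| * (1 / |lam|) = 1 := mul_one_div_cancel (ne_of_gt hl)
  constructor
  · intro hS
    have habs : ∀ t : ℝ, t ∈ spectrum ℝ L → |lam * (1 - k * t)| < 1 := by
      intro t ht
      have hmemt : ((lam : ℂ) - lam * k * t) ∈ spectrum ℂ M' := by
        rw [hmem, (htrans t).mp ht, mul_zero]
      have := hS _ hmemt
      have hcast : ((lam : ℂ) - lam * k * t) = ((lam * (1 - k * t) : ℝ) : ℂ) := by
        push_cast; ring
      rwa [hcast, Complex.norm_real, Real.norm_eq_abs] at this
    have hbm : |1 - k * μm| < 1 / |lam| := by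
      have := habs μm hμm.1
      rw [abs_mul] at this
      rw [lt_div_iff₀' hl]
      exact this
    have hbM : |1 - k * μM| < 1 / |lam| := by
      have := habs μM hμM.1
      rw [abs_mul] at this
      rw [lt_div_iff₀' hl]
      exact this
    have h1 : 1 - 1 / |lam| < k * μm := by
      have := le_abs_self (1 - k * μm); linarith
    have h2 : k * μM < 1 + 1 / |lam| := by
      have := neg_abs_le (1 - k * μM); linarith
    constructor
    · rw [one_div, inv_mul_lt_iff₀ hμmpos]
      linarith [h1]
    · rw [one_div, inv_mul_eq_div, lt_div_iff₀ hμMpos]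
      linarith [h2]
  · rintro ⟨h1, h2⟩
    have h1' : 1 - 1 / |lam| < k * μm := by
      rw [one_div, inv_mul_lt_iff₀ hμmpos] at h1
      linarith
    have h2' : k * μM < 1 + 1 / |lam| := by
      rw [one_div, inv_mul_eq_div, lt_div_iff₀ hμMpos] at h2
      linarith
    have hk : 0 < k := by
      nlinarith
    intro μ hμ
    set y : ℂ := ((lam : ℂ) - μ) / (lam * k) with hy
    have hlk : ((lam : ℂ) * k) ≠ 0 := by
      simp only [mul_ne_zero_iff]
      exact ⟨by exact_mod_cast hlam0, by exact_mod_cast ne_of_gt hk⟩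
    have hμy : μ = (lam : ℂ) - lam * k * y := by
      rw [hy, mul_div_cancel₀ _ hlk]; ring
    rw [hμy] at hμ
    rw [hmem] at hμ
    have hdet : (y • (1 : Matrix (Fin N) (Fin N) ℂ) - L').det = 0 := by
      have hpow : ((-(lam * k) : ℂ)) ^ N ≠ 0 := pow_ne_zero _ (neg_ne_zero.mpr hlk)
      exact (mul_eq_zero.mp hμ).resolve_left hpow
    have hyspec : y ∈ spectrum ℂ L' := (mem_spec_det L' y).mpr hdet
    rw [spec_real hL'] at hyspec
    obtain ⟨i, hi⟩ := hyspec
    set t : ℝ := hL'.eigenvalues i with ht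
    have hts : t ∈ spectrum ℝ L := by
      rw [htrans]
      rw [← hi] at hdet
      exact hdet
    have htlo : μm ≤ t := hμm.2 hts
    have hthi : t ≤ μM := hμM.2 hts
    have habs1 : |1 - k * t| < 1 / |lam| := by
      rw [abs_lt]
      constructor
      · nlinarith
      · nlinarith
    have hcast : ((lam : ℂ) - lam * k * t) = ((lam * (1 - k * t) : ℝ) : ℂ) := by
      push_cast; ring
    rw [hμy, ← hi, hcast, Complex.norm_real, Real.norm_eq_abs, abs_mul]
    nlinarith [abs_nonneg (1 - k * t)]


theorem stmt6 (lam : ℝ) (hlam : 1 ≤ |lam|)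
    (N : ℕ) (hN : 1 ≤ N) (L : Matrix (Fin N) (Fin N) ℝ)
    (hsymm : L.IsSymm) (hpd : L.PosDef)
    (μm μM : ℝ) (hμm : IsLeast (spectrum ℝ L) μm) (hμM : IsGreatest (spectrum ℝ L) μM)
    (k : ℝ) :
    SchurStable (lam • ((1 : Matrix (Fin N) (Fin N) ℝ) - k • L)) ↔
      (1 / μm) * (1 - 1 / |lam|) < k ∧ k < (1 / μM) * (1 + 1 / |lam|) := by
  exact stmt6' lam hlam N hN L hsymm hpd μm μM hμm hμM k
end

section
/- Let λ ∈ ℝ with |λ| ≥ 1, let N̄ ≥ 1, let L be an N̄ × N̄ real matrix that is symmetric and positive definite, and let μ_m and μ_M denote respectively the smallest and largest (real) eigenvalue of L. Then there exists k ∈ ℝ such that λ·(I_{N̄} − k·L) is Schur stable if and only if μ_M·(|λ| − 1) < μ_m·(|λ| + 1); in particular, when |λ| > 1 this condition reads μ_M/μ_m < (|λ| + 1)/(|λ| − 1). -/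
open Matrix Filter
open scoped Kronecker

section helpers
variable {n : Type} [Fintype n] [DecidableEq n]

lemma mem_spec_iff (M : Matrix n n ℝ) (x : ℝ) :
    x ∈ spectrum ℝ M ↔ (x : ℂ) ∈ spectrum ℂ (M.map Complex.ofReal) := by
  rw [spectrum.mem_iff, spectrum.mem_iff]
  have hmap : (algebraMap ℂ (Matrix n n ℂ)) (x:ℂ) - M.map Complex.ofReal
      = ((algebraMap ℝ (Matrix n n ℝ)) x - M).map Complex.ofReal := by
    ext i j
    by_cases h : i = j <;>
      simp [Matrix.algebraMap_matrix_apply, h, Matrix.map_apply]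
  rw [hmap]
  rw [Matrix.isUnit_iff_isUnit_det, Matrix.isUnit_iff_isUnit_det]
  have : ((((algebraMap ℝ (Matrix n n ℝ)) x - M).map Complex.ofReal)).det
      = Complex.ofReal (((algebraMap ℝ (Matrix n n ℝ)) x - M).det) :=
    (RingHom.map_det Complex.ofRealHom _).symm
  rw [this]
  simp [isUnit_iff_ne_zero]

lemma herm_spec (M : Matrix n n ℝ) (hM : M.IsSymm) :
    spectrum ℂ (M.map Complex.ofReal) = Complex.ofReal '' spectrum ℝ M := by
  have hherm : (M.map Complex.ofReal).IsHermitian := by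
    ext i j
    simp [Matrix.conjTranspose_apply, Matrix.map_apply, ← hM.apply i j, Matrix.transpose_apply]
  have hrange : spectrum ℂ (M.map Complex.ofReal)
      = Set.range (fun i => (hherm.eigenvalues i : ℂ)) := by
    rw [hherm.spectrum_eq_image_range, ← Set.range_comp]
    rfl
  ext z
  rw [hrange]
  constructor
  · rintro ⟨i, rfl⟩
    exact ⟨hherm.eigenvalues i, (mem_spec_iff M _).2 (hrange ▸ ⟨i, rfl⟩), rfl⟩
  · rintro ⟨x, hx, rfl⟩
    exact hrange ▸ (mem_spec_iff M x).1 hx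

lemma spec_affine [Nonempty n] (L : Matrix n n ℝ) (hne : (spectrum ℝ L).Nonempty)
    (lam k : ℝ) (hlam : lam ≠ 0) :
    spectrum ℝ (lam • ((1 : Matrix n n ℝ) - k • L))
      = (fun μ => lam * (1 - k * μ)) '' spectrum ℝ L := by
  by_cases hk : k = 0
  · subst hk
    have h1 : lam • ((1 : Matrix n n ℝ) - (0:ℝ) • L) = algebraMap ℝ (Matrix n n ℝ) lam := by
      rw [zero_smul, sub_zero, Algebra.algebraMap_eq_smul_one]
    rw [h1, spectrum.scalar_eq]
    ext x
    simp only [Set.mem_singleton_iff, Set.mem_image]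
    constructor
    · rintro rfl
      exact ⟨hne.choose, hne.choose_spec, by ring⟩
    · rintro ⟨μ, hμ, rfl⟩; ring
  · have hc : lam * k ≠ 0 := mul_ne_zero hlam hk
    have h1 : lam • ((1 : Matrix n n ℝ) - k • L)
        = algebraMap ℝ (Matrix n n ℝ) lam - (Units.mk0 (lam * k) hc) • L := by
      rw [smul_sub, smul_smul, Algebra.algebraMap_eq_smul_one]
      rfl
    rw [h1, ← spectrum.singleton_sub_eq, spectrum.unit_smul_eq_smul]
    ext x
    simp only [Set.mem_sub, Set.mem_smul_set, Set.mem_singleton_iff, Set.mem_image,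
      Units.smul_def, Units.val_mk0, smul_eq_mul]
    constructor
    · rintro ⟨a, rfl, w, ⟨μ, hμ, rfl⟩, rfl⟩
      exact ⟨μ, hμ, by ring⟩
    · rintro ⟨μ, hμ, rfl⟩
      exact ⟨lam, rfl, lam * k * μ, ⟨μ, hμ, rfl⟩, by ring⟩

end helpers

theorem stmt7 (lam : ℝ) (hlam : 1 ≤ |lam|)
    (N : ℕ) (hN : 1 ≤ N) (L : Matrix (Fin N) (Fin N) ℝ)
    (hsymm : L.IsSymm) (hpd : L.PosDef)
    (μm μM : ℝ) (hμm : IsLeast (spectrum ℝ L) μm) (hμM : IsGreatest (spectrum ℝ L) μM) :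
    ((∃ k : ℝ, SchurStable (lam • ((1 : Matrix (Fin N) (Fin N) ℝ) - k • L))) ↔
        μM * (|lam| - 1) < μm * (|lam| + 1)) ∧
      (1 < |lam| →
        ((∃ k : ℝ, SchurStable (lam • ((1 : Matrix (Fin N) (Fin N) ℝ) - k • L))) ↔
          μM / μm < (|lam| + 1) / (|lam| - 1))) := by
  have hNe : Nonempty (Fin N) := Fin.pos_iff_nonempty.mp hN
  have hlam0 : lam ≠ 0 := fun h => by simp [h] at hlam; linarith
  set a := |lam| with ha
  have ha0 : 0 < a := lt_of_lt_of_le one_pos hlam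
  have hne : (spectrum ℝ L).Nonempty := ⟨μm, hμm.1⟩
  -- positivity of μm
  have hμmpos : 0 < μm := by
    obtain ⟨i, hi⟩ := hpd.1.spectrum_real_eq_range_eigenvalues ▸ hμm.1
    exact hi ▸ hpd.eigenvalues_pos i
  have hμMpos : 0 < μM := lt_of_lt_of_le hμmpos (hμm.2 hμM.1)
  have hle : μm ≤ μM := hμm.2 hμM.1
  -- characterization of Schur stability
  have hkey : ∀ k : ℝ, SchurStable (lam • ((1 : Matrix (Fin N) (Fin N) ℝ) - k • L)) ↔
      ∀ μ ∈ spectrum ℝ L, |lam * (1 - k * μ)| < 1 := by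
    intro k
    have Msym : (lam • ((1 : Matrix (Fin N) (Fin N) ℝ) - k • L)).IsSymm := by
      rw [Matrix.IsSymm]
      rw [Matrix.transpose_smul, Matrix.transpose_sub, Matrix.transpose_smul,
        Matrix.transpose_one, hsymm.eq]
    unfold SchurStable
    rw [herm_spec _ Msym, spec_affine L hne lam k hlam0]
    constructor
    · intro h μ hμ
      have := h _ ⟨_, ⟨μ, hμ, rfl⟩, rfl⟩
      simpa only [Complex.norm_real, Real.norm_eq_abs] using this
    · rintro h z ⟨x, ⟨μ, hμ, rfl⟩, rfl⟩
      simpa only [Complex.norm_real, Real.norm_eq_abs] using h μ hμ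
  have hmain : (∃ k : ℝ, SchurStable (lam • ((1 : Matrix (Fin N) (Fin N) ℝ) - k • L))) ↔
      μM * (a - 1) < μm * (a + 1) := by
    constructor
    · rintro ⟨k, hk⟩
      rw [hkey k] at hk
      have h1 := hk μm hμm.1
      have h2 := hk μM hμM.1
      rw [abs_mul, ← ha] at h1 h2
      have e1 : a * (1 - k * μm) ≤ a * |1 - k * μm| :=
        mul_le_mul_of_nonneg_left (le_abs_self _) (le_of_lt ha0)
      have e2 : a * (k * μM - 1) ≤ a * |1 - k * μM| := by
        have : k * μM - 1 ≤ |1 - k * μM| := by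
          rw [abs_sub_comm]; exact le_abs_self _
        exact mul_le_mul_of_nonneg_left this (le_of_lt ha0)
      have hp1 : a - 1 < a * (k * μm) := by nlinarith
      have hq : a * (k * μM) < a + 1 := by nlinarith
      have hkpos : 0 < k := by
        have habs : |1 - k * μm| < 1 := by
          have : |1 - k * μm| ≤ a * |1 - k * μm| :=
            le_mul_of_one_le_left (abs_nonneg _) hlam
          linarith
        rw [abs_lt] at habs
        nlinarith
      nlinarith [mul_lt_mul_of_pos_left hp1 hμMpos, mul_lt_mul_of_pos_left hq hμmpos]
    · intro hcond
      set k := ((a - 1) / μm + (a + 1) / μM) / (2 * a) with hkdef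
      have hkpos : 0 < k := by
        apply div_pos _ (by linarith)
        have : 0 ≤ (a - 1) / μm := div_nonneg (by linarith) (le_of_lt hμmpos)
        have : 0 < (a + 1) / μM := div_pos (by linarith) hμMpos
        linarith
      have hμm' : μm ≠ 0 := ne_of_gt hμmpos
      have hμM' : μM ≠ 0 := ne_of_gt hμMpos
      have ha' : a ≠ 0 := ne_of_gt ha0
      have hb1 : a - 1 < a * (k * μm) := by
        have heq : a * (k * μm) = ((a - 1) + μm * (a + 1) / μM) / 2 := by
          rw [hkdef]; field_simp
        rw [heq, lt_div_iff₀ (by norm_num : (0:ℝ) < 2)]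
        have : a - 1 < μm * (a + 1) / μM := by
          rw [lt_div_iff₀ hμMpos]; nlinarith
        linarith
      have hb2 : a * (k * μM) < a + 1 := by
        have heq : a * (k * μM) = ((a - 1) * μM / μm + (a + 1)) / 2 := by
          rw [hkdef]; field_simp
        rw [heq, div_lt_iff₀ (by norm_num : (0:ℝ) < 2)]
        have : (a - 1) * μM / μm < a + 1 := by
          rw [div_lt_iff₀ hμmpos]; nlinarith
        linarith
      refine ⟨k, (hkey k).2 fun μ hμ => ?_⟩
      have hμlo : μm ≤ μ := hμm.2 hμ
      have hμhi : μ ≤ μM := hμM.2 hμ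
      have c1 : a * (k * μm) ≤ a * (k * μ) := by
        apply mul_le_mul_of_nonneg_left _ (le_of_lt ha0)
        exact mul_le_mul_of_nonneg_left hμlo (le_of_lt hkpos)
      have c2 : a * (k * μ) ≤ a * (k * μM) := by
        apply mul_le_mul_of_nonneg_left _ (le_of_lt ha0)
        exact mul_le_mul_of_nonneg_left hμhi (le_of_lt hkpos)
      rw [abs_mul, ← ha]
      have : a * |1 - k * μ| = |a * (1 - k * μ)| := by
        rw [abs_mul, abs_of_pos ha0]
      rw [this, abs_lt]
      constructor <;> nlinarith
  refine ⟨hmain, fun hgt => hmain.trans ?_⟩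
  rw [div_lt_div_iff₀ hμmpos (by linarith : (0:ℝ) < a - 1)]
  constructor <;> intro h <;> nlinarith
end

section
/- Let m ≥ 1, let d : Fin m → ℕ with d j ≥ 1 for all j, let λ : Fin m → ℝ, and let A be the n × n real matrix (with n = Σ_j d j, indexed by the sigma type Σ j, Fin (d j)) given as the block-diagonal matrix whose j-th diagonal block is the Jordan miniblock J(λ j, d j). Let p ≥ 1 and let C be a p × n real matrix. Fix j₀ ∈ Fin m and suppose that the (n + p) × n real matrix obtained by stacking A − (λ j₀)·I_n on top of C has rank n. Then the column of C indexed by ⟨j₀, 0⟩ (the first index of the j₀-th miniblock) is nonzero, i.e., there exists a row index i with C i ⟨j₀,0⟩ ≠ 0. -/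
open Matrix Filter
open scoped Kronecker

lemma aux_fullrank {α β : Type*} [Fintype α] [Fintype β] [DecidableEq β]
    (M : Matrix α β ℝ) (e : β)
    (hcol : ∀ i, M i e = 0) (hrank : M.rank = Fintype.card β) : False := by
  have hker : Pi.single e (1:ℝ) ∈ LinearMap.ker M.mulVecLin := by
    ext i
    simp [Matrix.mulVecLin_apply, Matrix.mulVec_single, hcol]
  have h2 := LinearMap.finrank_range_add_finrank_ker M.mulVecLin
  rw [Matrix.rank] at hrank
  have hpos : 0 < Module.finrank ℝ (LinearMap.ker M.mulVecLin) := by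
    rw [Module.finrank_pos_iff]
    exact ⟨⟨⟨_, hker⟩, 0, by intro h; have := congrFun (congrArg Subtype.val h) e; simp at this⟩⟩
  have : Module.finrank ℝ (β → ℝ) = Fintype.card β := Module.finrank_fintype_fun_eq_card ℝ
  omega

theorem stmt8 (m : ℕ) (hm : 1 ≤ m) (d : Fin m → ℕ) (hd : ∀ j, 1 ≤ d j)
    (lam : Fin m → ℝ)
    (p : ℕ) (hp : 1 ≤ p)
    (C : Matrix (Fin p) (Σ j : Fin m, Fin (d j)) ℝ)
    (j₀ : Fin m)
    (hrank : (Matrix.fromRows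
        (Matrix.blockDiagonal' (fun j => jordanBlock (lam j) (d j)) -
          lam j₀ • (1 : Matrix (Σ j : Fin m, Fin (d j)) (Σ j : Fin m, Fin (d j)) ℝ))
        C).rank = Fintype.card (Σ j : Fin m, Fin (d j))) :
    ∃ i : Fin p, C i ⟨j₀, ⟨0, hd j₀⟩⟩ ≠ 0 := by
  by_contra h
  push_neg at h
  set e : Σ j : Fin m, Fin (d j) := ⟨j₀, ⟨0, hd j₀⟩⟩ with he
  refine aux_fullrank _ e ?_ hrank
  rintro (⟨k, a⟩ | i)
  · rw [Matrix.fromRows_apply_inl]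
    rw [Matrix.sub_apply, Matrix.smul_apply, Matrix.one_apply]
    rw [Matrix.blockDiagonal'_apply]
    by_cases hk : k = j₀
    · subst hk
      simp only [dif_pos rfl]
      by_cases ha : a = ⟨0, hd k⟩
      · subst ha
        simp [jordanBlock, he]
        rw [if_pos rfl, sub_self]
      · have : (⟨k, a⟩ : Σ j : Fin m, Fin (d j)) ≠ e := by
          simp [he, ha]
        rw [if_neg this]
        have ha' : (a : ℕ) ≠ 0 := by
          intro h0
          exact ha (Fin.ext h0)
        simp [jordanBlock, Fin.ext_iff, ha', he]
        exact fun hae => absurd hae ha'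
    · have : (⟨k, a⟩ : Σ j : Fin m, Fin (d j)) ≠ e := by
        simp [he, hk]
      rw [dif_neg hk, if_neg this]
      simp
  · rw [Matrix.fromRows_apply_inr]
    exact h i
end

section
/- Let N ≥ 2 and let W be an N × N real matrix with W symmetric, all entries nonnegative, and zero diagonal. Let G be the simple graph on Fin N in which distinct vertices i and j are adjacent exactly when W i j > 0, and assume G is connected. Let L := D − W, where D is the diagonal matrix with D i i = Σ_j W i j (the weighted Laplacian). Then for every nonempty proper subset T of the vertex set, the principal submatrix of L obtained by keeping the rows and columns indexed by T is positive definite (in particular all of its eigenvalues are real and strictly positive). -/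
open Matrix Filter
open scoped Kronecker

lemma quad_eq' (N : ℕ) (W : Matrix (Fin N) (Fin N) ℝ) (hsymm : W.IsSymm)
    (v : Fin N → ℝ) :
    v ⬝ᵥ ((Matrix.diagonal (fun i => ∑ j, W i j) - W) *ᵥ v)
      = (1/2) * ∑ i, ∑ j, W i j * (v i - v j)^2 := by
  have hswap : ∑ i, ∑ j, W i j * (v j)^2 = ∑ i, ∑ j, W i j * (v i)^2 := by
    rw [Finset.sum_comm]
    exact Finset.sum_congr rfl fun j _ => Finset.sum_congr rfl fun i _ => by
      rw [hsymm.apply i j]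
  have hL : v ⬝ᵥ ((Matrix.diagonal (fun i => ∑ j, W i j) - W) *ᵥ v)
      = (∑ i, ∑ j, W i j * (v i)^2) - ∑ i, ∑ j, W i j * (v i * v j) := by
    simp only [dotProduct, Matrix.mulVec, Matrix.sub_apply, Matrix.diagonal_apply,
      dotProduct, ite_mul, zero_mul, sub_mul, Finset.sum_sub_distrib,
      Finset.sum_ite_eq, Finset.mem_univ, if_true, mul_sub, Finset.mul_sum]
    congr 1
    · refine Finset.sum_congr rfl fun i _ => ?_
      rw [Finset.sum_mul, Finset.mul_sum]
      exact Finset.sum_congr rfl fun j _ => by ring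
    · exact Finset.sum_congr rfl fun i _ => Finset.sum_congr rfl fun j _ => by ring
  have hR : ∑ i, ∑ j, W i j * (v i - v j)^2
      = (∑ i, ∑ j, W i j * (v i)^2) + (∑ i, ∑ j, W i j * (v j)^2)
        - 2 * ∑ i, ∑ j, W i j * (v i * v j) := by
    rw [Finset.mul_sum, ← Finset.sum_add_distrib, ← Finset.sum_sub_distrib]
    refine Finset.sum_congr rfl fun i _ => ?_
    rw [Finset.mul_sum, ← Finset.sum_add_distrib, ← Finset.sum_sub_distrib]
    exact Finset.sum_congr rfl fun j _ => by ring
  rw [hL, hR, hswap]; ring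

theorem stmt9 (N : ℕ) (hN : 2 ≤ N) (W : Matrix (Fin N) (Fin N) ℝ)
    (hsymm : W.IsSymm) (hnonneg : ∀ i j, 0 ≤ W i j) (hdiag : ∀ i, W i i = 0)
    (G : SimpleGraph (Fin N)) (hG : ∀ i j, G.Adj i j ↔ i ≠ j ∧ 0 < W i j)
    (hconn : G.Connected)
    (L : Matrix (Fin N) (Fin N) ℝ)
    (hL : L = Matrix.diagonal (fun i => ∑ j, W i j) - W)
    (T : Finset (Fin N)) (hT : T.Nonempty) (hT' : T ≠ Finset.univ) :
    (L.submatrix (fun x : {j // j ∈ T} => (x : Fin N))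
      (fun x : {j // j ∈ T} => (x : Fin N))).PosDef := by
  have hLsym : L.IsSymm := by
    rw [hL]
    exact Matrix.IsSymm.ext fun i j => by
      simp [Matrix.diagonal_apply, hsymm.apply i j]
      rcases eq_or_ne i j with h | h
      · simp [h]
      · simp [h, Ne.symm h]
  rw [Matrix.posDef_iff_dotProduct_mulVec]
  constructor
  · -- Hermitian
    ext i j
    simp [Matrix.conjTranspose_apply, hLsym.apply (i : Fin N) (j : Fin N)]
  · intro x hx
    -- extend x by zero
    set v : Fin N → ℝ := fun i => if h : i ∈ T then x ⟨i, h⟩ else 0 with hv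
    have hvT : ∀ p : {j // j ∈ T}, v (p : Fin N) = x p := by
      rintro ⟨p, hp⟩; simp [hv, hp]
    have hform : star x ⬝ᵥ ((L.submatrix (fun x : {j // j ∈ T} => (x : Fin N))
        (fun x : {j // j ∈ T} => (x : Fin N))) *ᵥ x) = v ⬝ᵥ (L *ᵥ v) := by
      simp only [dotProduct, Matrix.mulVec, dotProduct, Matrix.submatrix_apply,
        star_trivial]
      have hv0' : ∀ j, j ∉ T → v j = 0 := fun j hj => by simp [hv, hj]
      have e1 : ∀ i : Fin N,
          (∑ p : {j // j ∈ T}, L i (p : Fin N) * v (p : Fin N))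
            = ∑ j ∈ T, L i j * v j :=
        fun i => Finset.sum_coe_sort T (fun j => L i j * v j)
      calc (∑ p : {j // j ∈ T}, x p * ∑ q : {j // j ∈ T}, L (p : Fin N) (q : Fin N) * x q)
          = ∑ p : {j // j ∈ T}, v (p : Fin N) * ∑ q : {j // j ∈ T},
              L (p : Fin N) (q : Fin N) * v (q : Fin N) := by
            simp only [hvT]
        _ = ∑ p : {j // j ∈ T}, v (p : Fin N) * ∑ j ∈ T, L (p : Fin N) j * v j := by
            exact Finset.sum_congr rfl fun p _ => by rw [e1]
        _ = ∑ i ∈ T, v i * ∑ j ∈ T, L i j * v j :=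
            Finset.sum_coe_sort T (fun i => v i * ∑ j ∈ T, L i j * v j)
        _ = ∑ i, v i * ∑ j, L i j * v j := by
            rw [Finset.sum_subset T.subset_univ
              (fun i _ hi => by rw [hv0' i hi, zero_mul])]
            exact Finset.sum_congr rfl fun i _ =>
              congrArg _ (Finset.sum_subset T.subset_univ
                (fun j _ hj => by rw [hv0' j hj, mul_zero]))
    rw [hform, hL, quad_eq' N W hsymm v]
    have hterm : ∀ i j, 0 ≤ W i j * (v i - v j)^2 := fun i j =>
      mul_nonneg (hnonneg i j) (sq_nonneg _)
    have hge : 0 ≤ ∑ i, ∑ j, W i j * (v i - v j)^2 :=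
      Finset.sum_nonneg fun i _ => Finset.sum_nonneg fun j _ => hterm i j
    rcases hge.lt_or_eq with h | h
    · positivity
    · exfalso
      -- all terms zero
      have hzero : ∀ i j : Fin N, W i j * (v i - v j)^2 = 0 := by
        intro i j
        have h1 := (Finset.sum_eq_zero_iff_of_nonneg
          (fun i _ => Finset.sum_nonneg fun j _ => hterm i j)).mp h.symm i (Finset.mem_univ i)
        exact (Finset.sum_eq_zero_iff_of_nonneg (fun j _ => hterm i j)).mp h1 j
          (Finset.mem_univ j)
      have hedge : ∀ i j : Fin N, G.Adj i j → v i = v j := by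
        intro i j hij
        have hw := ((hG i j).mp hij).2
        have := hzero i j
        have h2 : (v i - v j)^2 = 0 := by
          rcases mul_eq_zero.mp this with h | h
          · exact absurd h hw.ne'
          · exact h
        have := sq_eq_zero_iff.mp h2
        linarith
      have hconst : ∀ i j : Fin N, v i = v j := by
        intro i j
        obtain ⟨w⟩ := hconn.preconnected i j
        induction w with
        | nil => rfl
        | cons h p ih => rw [hedge _ _ h]; exact ih
      obtain ⟨j0, hj0⟩ : ∃ j0, j0 ∉ T := by
        by_contra hc
        push_neg at hc
        exact hT' (Finset.eq_univ_iff_forall.mpr hc)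
      have hv0 : ∀ i, v i = 0 := fun i => by
        rw [hconst i j0]; simp [hv, hj0]
      apply hx
      funext p
      have := hv0 (p : Fin N)
      rwa [hvT] at this
end

section
/- Let d ≥ 1, let N̄ ≥ 1, let L be an N̄ × N̄ symmetric real matrix with smallest eigenvalue μ_m and largest eigenvalue μ_M, let n : Fin N̄ → ℕ satisfy 1 ≤ n i ≤ d for all i, and let S be the associated block-diagonal selection matrix. Then every complex eigenvalue of S · (L ⊗ I_d) · Sᵀ is real and lies in the closed interval [μ_m, μ_M]. -/
open Matrix Filter
open scoped Kronecker

open scoped Pointwise ComplexOrder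

lemma shift_psd {m : Type} [Fintype m] [DecidableEq m] {L : Matrix m m ℝ} (hL : L.IsHermitian)
    {c : ℝ} (hc : ∀ x ∈ spectrum ℝ L, c ≤ x) : (L - c • 1).PosSemidef := by
  have hLt : Lᵀ = L := by rw [← conjTranspose_eq_transpose_of_trivial]; exact hL
  have hH : (L - c • 1).IsHermitian := by
    simp [Matrix.IsHermitian, conjTranspose_sub, conjTranspose_smul, hLt]
  apply hH.posSemidef_iff_eigenvalues_nonneg.mpr
  intro i; rw [Pi.zero_apply]
  have hset : spectrum ℝ (L - c • 1) = spectrum ℝ L - ({c} : Set ℝ) := by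
    rw [show L - c • 1 = L - algebraMap ℝ (Matrix m m ℝ) c from by
      rw [Algebra.algebraMap_eq_smul_one], ← spectrum.sub_singleton_eq]
  have hmem : hH.eigenvalues i ∈ spectrum ℝ L - ({c} : Set ℝ) :=
    Set.mem_of_mem_of_subset (hH.eigenvalues_mem_spectrum_real i) hset.le
  obtain ⟨x, hx, y, hy, hxy⟩ := Set.mem_sub.mp hmem
  rw [Set.mem_singleton_iff] at hy
  subst hy
  have := hc x hx
  linarith [hxy ▸ le_refl (hH.eigenvalues i)]

lemma shift_psd' {m : Type} [Fintype m] [DecidableEq m] {L : Matrix m m ℝ} (hL : L.IsHermitian)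
    {c : ℝ} (hc : ∀ x ∈ spectrum ℝ L, x ≤ c) : (c • 1 - L).PosSemidef := by
  have hLt : Lᵀ = L := by rw [← conjTranspose_eq_transpose_of_trivial]; exact hL
  have hH : (c • 1 - L).IsHermitian := by
    simp [Matrix.IsHermitian, conjTranspose_sub, conjTranspose_smul, hLt]
  apply hH.posSemidef_iff_eigenvalues_nonneg.mpr
  intro i; rw [Pi.zero_apply]
  have hset : spectrum ℝ (c • 1 - L) = ({c} : Set ℝ) - spectrum ℝ L := by
    rw [show c • (1 : Matrix m m ℝ) - L = algebraMap ℝ (Matrix m m ℝ) c - L from by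
      rw [Algebra.algebraMap_eq_smul_one], spectrum.singleton_sub_eq]
  have hmem : hH.eigenvalues i ∈ ({c} : Set ℝ) - spectrum ℝ L :=
    Set.mem_of_mem_of_subset (hH.eigenvalues_mem_spectrum_real i) hset.le
  obtain ⟨y, hy, x, hx, hxy⟩ := Set.mem_sub.mp hmem
  rw [Set.mem_singleton_iff] at hy
  subst hy
  have := hc x hx
  linarith [hxy ▸ le_refl (hH.eigenvalues i)]

lemma kron_one_psd {m : Type} [Fintype m] [DecidableEq m] {d : ℕ} {P : Matrix m m ℝ}
    (hP : P.PosSemidef) : (P ⊗ₖ (1 : Matrix (Fin d) (Fin d) ℝ)).PosSemidef := by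
  obtain ⟨B, rfl⟩ : ∃ B : Matrix m m ℝ, P = Bᴴ * B := by
    open scoped MatrixOrder in exact CStarAlgebra.nonneg_iff_eq_star_mul_self.mp hP.nonneg
  have h1 : (B ⊗ₖ (1 : Matrix (Fin d) (Fin d) ℝ))ᴴ * (B ⊗ₖ (1 : Matrix (Fin d) (Fin d) ℝ)) =
      (Bᴴ * B) ⊗ₖ (1 : Matrix (Fin d) (Fin d) ℝ) := by
    ext ⟨i, a⟩ ⟨j, b⟩
    simp only [Matrix.mul_apply, Matrix.kroneckerMap_apply, Matrix.conjTranspose_apply,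
      Matrix.one_apply, Fintype.sum_prod_type, star_trivial, mul_ite, ite_mul, mul_one,
      mul_zero, zero_mul, one_mul, Finset.sum_ite_eq, Finset.sum_ite_eq', Finset.mem_univ,
      if_true]
    by_cases hab : a = b
    · simp [hab, Finset.sum_ite_eq, Finset.sum_ite_eq']
    · simp only [hab, if_false]
      simp [Finset.sum_ite_eq, Finset.sum_ite_eq']
      exact fun h => absurd h.symm hab
  rw [← h1]
  exact Matrix.posSemidef_conjTranspose_mul_self _

lemma psd_map_complex {m : Type} [Fintype m] [DecidableEq m] {P : Matrix m m ℝ}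
    (hP : P.PosSemidef) : (P.map Complex.ofReal).PosSemidef := by
  obtain ⟨B, rfl⟩ : ∃ B : Matrix m m ℝ, P = Bᴴ * B := by
    open scoped MatrixOrder in exact CStarAlgebra.nonneg_iff_eq_star_mul_self.mp hP.nonneg
  have h1 : (Bᴴ * B).map Complex.ofReal =
      (B.map Complex.ofReal)ᴴ * (B.map Complex.ofReal) := by
    rw [show (Complex.ofReal : ℝ → ℂ) = ⇑Complex.ofRealHom from rfl,
      Matrix.map_mul]
    congr 1
    exact Matrix.conjTranspose_map _ (fun x => by simp)
  rw [h1]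
  exact Matrix.posSemidef_conjTranspose_mul_self _

lemma sel_mul_sel_transpose (d N : ℕ) (n : Fin N → ℕ) (hnd : ∀ i, n i ≤ d) :
    selMatrix d N n * (selMatrix d N n)ᵀ = 1 := by
  ext p q
  rw [Matrix.mul_apply]
  have hb : ((p.2 : ℕ) : ℕ) < d := lt_of_lt_of_le p.2.isLt (hnd p.1)
  rw [Finset.sum_eq_single (⟨p.1, ⟨(p.2 : ℕ), hb⟩⟩ : Fin N × Fin d)]
  · rw [Matrix.transpose_apply]
    show (if p.1 = p.1 ∧ ((p.2 : ℕ)) = (((⟨(p.2 : ℕ), hb⟩ : Fin d) : ℕ)) then (1:ℝ) else 0) *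
        (if q.1 = p.1 ∧ ((q.2 : ℕ)) = (((⟨(p.2 : ℕ), hb⟩ : Fin d) : ℕ)) then (1:ℝ) else 0) =
        (1 : Matrix (Σ i : Fin N, Fin (n i)) (Σ i : Fin N, Fin (n i)) ℝ) p q
    rw [if_pos ⟨rfl, rfl⟩, one_mul, Matrix.one_apply]
    by_cases h : p = q
    · subst h
      rw [if_pos rfl, if_pos ⟨rfl, rfl⟩]
    · rw [if_neg h, if_neg]
      rintro ⟨h1, h2⟩
      apply h
      refine Sigma.ext h1.symm ?_
      rw [Fin.heq_ext_iff (by rw [h1])]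
      exact h2.symm
  · rintro ⟨j, b⟩ - hne
    rw [Matrix.transpose_apply]
    show (if p.1 = j ∧ ((p.2 : ℕ)) = ((b : ℕ)) then (1:ℝ) else 0) * _ = 0
    rw [if_neg, zero_mul]
    rintro ⟨h1, h2⟩
    apply hne
    simp only [Prod.mk.injEq]
    exact ⟨h1.symm, Fin.ext h2.symm⟩
  · intro h; exact absurd (Finset.mem_univ _) h

theorem stmt10 (d : ℕ) (hd : 1 ≤ d)
    (N : ℕ) (hN : 1 ≤ N) (L : Matrix (Fin N) (Fin N) ℝ) (hsymm : L.IsSymm)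
    (μm μM : ℝ) (hμm : IsLeast (spectrum ℝ L) μm) (hμM : IsGreatest (spectrum ℝ L) μM)
    (n : Fin N → ℕ) (hn1 : ∀ i, 1 ≤ n i) (hnd : ∀ i, n i ≤ d) :
    ∀ μ ∈ spectrum ℂ ((selMatrix d N n *
        (L ⊗ₖ (1 : Matrix (Fin d) (Fin d) ℝ)) * (selMatrix d N n)ᵀ).map Complex.ofReal),
      μ.im = 0 ∧ μm ≤ μ.re ∧ μ.re ≤ μM := by
  classical
  set S := selMatrix d N n with hS
  set M := S * (L ⊗ₖ (1 : Matrix (Fin d) (Fin d) ℝ)) * Sᵀ with hM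
  have hSS : S * Sᵀ = 1 := sel_mul_sel_transpose d N n hnd
  have hSH : Sᴴ = Sᵀ := conjTranspose_eq_transpose_of_trivial S
  have hL : L.IsHermitian := by
    rw [Matrix.IsHermitian, conjTranspose_eq_transpose_of_trivial]; exact hsymm
  have h1 : (L - μm • 1).PosSemidef := shift_psd hL (fun x hx => hμm.2 hx)
  have h2 : (μM • 1 - L).PosSemidef := shift_psd' hL (fun x hx => hμM.2 hx)
  -- kronecker expansion lemmas
  have hk1 : (L - μm • 1) ⊗ₖ (1 : Matrix (Fin d) (Fin d) ℝ)
      = L ⊗ₖ (1 : Matrix (Fin d) (Fin d) ℝ) - μm • (1 : Matrix (Fin N × Fin d) (Fin N × Fin d) ℝ) := by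
    rw [← Matrix.one_kronecker_one (α := ℝ) (m := Fin N) (n := Fin d)]
    ext ⟨i, a⟩ ⟨j, b⟩
    simp only [Matrix.kroneckerMap_apply, Matrix.sub_apply, Matrix.smul_apply,
      Matrix.one_apply, smul_eq_mul]
    by_cases h : i = j <;> by_cases h' : a = b <;> simp [h, h'] <;> ring
  have hk2 : (μM • 1 - L) ⊗ₖ (1 : Matrix (Fin d) (Fin d) ℝ)
      = μM • (1 : Matrix (Fin N × Fin d) (Fin N × Fin d) ℝ) - L ⊗ₖ (1 : Matrix (Fin d) (Fin d) ℝ) := by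
    rw [← Matrix.one_kronecker_one (α := ℝ) (m := Fin N) (n := Fin d)]
    ext ⟨i, a⟩ ⟨j, b⟩
    simp only [Matrix.kroneckerMap_apply, Matrix.sub_apply, Matrix.smul_apply,
      Matrix.one_apply, smul_eq_mul]
    by_cases h : i = j <;> by_cases h' : a = b <;> simp [h, h'] <;> ring
  have P1 : (M - μm • 1).PosSemidef := by
    have h := (kron_one_psd (d := d) h1).mul_mul_conjTranspose_same S
    rw [hSH, hk1, Matrix.mul_sub, Matrix.mul_smul, Matrix.mul_one, Matrix.sub_mul,
      Matrix.smul_mul, hSS] at h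
    exact h
  have P2 : (μM • 1 - M).PosSemidef := by
    have h := (kron_one_psd (d := d) h2).mul_mul_conjTranspose_same S
    rw [hSH, hk2, Matrix.mul_sub, Matrix.mul_smul, Matrix.mul_one, Matrix.sub_mul,
      Matrix.smul_mul, hSS] at h
    exact h
  have Q1 : ((M - μm • 1).map Complex.ofReal).PosSemidef := psd_map_complex P1
  have Q2 : ((μM • 1 - M).map Complex.ofReal).PosSemidef := psd_map_complex P2
  intro μ hμ
  set Mc := M.map Complex.ofReal with hMc
  have hnu : ¬IsUnit (algebraMap ℂ (Matrix (Σ i : Fin N, Fin (n i)) (Σ i : Fin N, Fin (n i)) ℂ) μ - Mc) :=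
    spectrum.mem_iff.mp hμ
  have hdet : (algebraMap ℂ (Matrix (Σ i : Fin N, Fin (n i)) (Σ i : Fin N, Fin (n i)) ℂ) μ - Mc).det = 0 := by
    by_contra hne
    exact hnu ((Matrix.isUnit_iff_isUnit_det _).mpr (isUnit_iff_ne_zero.mpr hne))
  obtain ⟨v, hv0, hv⟩ := (Matrix.exists_mulVec_eq_zero_iff).mpr hdet
  have hMv : Mc *ᵥ v = μ • v := by
    rw [Matrix.sub_mulVec, sub_eq_zero] at hv
    rw [← hv, Algebra.algebraMap_eq_smul_one, Matrix.smul_mulVec, Matrix.one_mulVec]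
  set t : ℂ := star v ⬝ᵥ v with hT
  have ht0 : 0 ≤ t := dotProduct_star_self_nonneg v
  have htne : t ≠ 0 := fun h => hv0 (dotProduct_star_self_eq_zero.mp h)
  have htim : t.im = 0 := ((Complex.le_def.mp ht0).2).symm
  have htre : 0 < t.re := by
    rcases lt_or_eq_of_le (Complex.le_def.mp ht0).1 with h | h
    · simpa using h
    · exact absurd (Complex.ext h.symm htim) htne
  -- first quadratic form
  have hmap1 : (M - μm • 1).map Complex.ofReal = Mc - (μm : ℂ) • 1 := by
    ext i j
    simp [hMc, Matrix.map_apply, Matrix.sub_apply, Matrix.smul_apply, Matrix.one_apply,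
      apply_ite Complex.ofReal]
  have hmap2 : (μM • 1 - M).map Complex.ofReal = (μM : ℂ) • 1 - Mc := by
    ext i j
    simp [hMc, Matrix.map_apply, Matrix.sub_apply, Matrix.smul_apply, Matrix.one_apply,
      apply_ite Complex.ofReal]
  have q1 : (0 : ℂ) ≤ (μ - (μm : ℂ)) * t := by
    have h := Q1.dotProduct_mulVec_nonneg v
    rw [hmap1, Matrix.sub_mulVec, hMv, Matrix.smul_mulVec, Matrix.one_mulVec,
      ← sub_smul] at h
    simpa [dotProduct_smul, smul_eq_mul] using h
  have q2 : (0 : ℂ) ≤ ((μM : ℂ) - μ) * t := by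
    have h := Q2.dotProduct_mulVec_nonneg v
    rw [hmap2, Matrix.sub_mulVec, hMv, Matrix.smul_mulVec, Matrix.one_mulVec,
      ← sub_smul] at h
    simpa [dotProduct_smul, smul_eq_mul] using h
  have q1im : ((μ - (μm : ℂ)) * t).im = 0 := ((Complex.le_def.mp q1).2).symm
  have q1re : 0 ≤ ((μ - (μm : ℂ)) * t).re := (Complex.le_def.mp q1).1
  have q2re : 0 ≤ (((μM : ℂ) - μ) * t).re := (Complex.le_def.mp q2).1
  rw [Complex.mul_im] at q1im
  rw [Complex.mul_re] at q1re
  rw [Complex.mul_re] at q2re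
  simp only [Complex.sub_re, Complex.sub_im, Complex.ofReal_re, Complex.ofReal_im,
    sub_zero, zero_sub, htim, mul_zero, zero_add, neg_mul, sub_neg_eq_add, add_zero] at q1im q1re q2re
  have him : μ.im = 0 := by
    rcases mul_eq_zero.mp q1im with h | h
    · exact h
    · exact absurd h htre.ne'
  refine ⟨him, ?_, ?_⟩
  · nlinarith [q1re, htre]
  · nlinarith [q2re, htre]
end

section
/- Let λ ∈ ℝ with |λ| ≥ 1, let d ≥ 1 and let A = J(λ,d) be the Jordan miniblock. Let N̄ ≥ 1, let L be an N̄ × N̄ real matrix and let k ∈ ℝ, and set Φ := (I_{N̄} − k·L) ⊗ A. Then the discrete-time linear system e(t+1) = Φ · e(t) is globally asymptotically stable — i.e., for every initial vector e(0) ∈ ℝ^{N̄·d} the sequence Φᵗ · e(0) tends to the zero vector as t → ∞ — if and only if for every complex eigenvalue μ of L one has |1 − k·μ| < 1/|λ|. -/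
open Matrix Filter
open scoped Kronecker

section Aux

open scoped ENNReal NNReal

attribute [local instance] Matrix.linftyOpNormedAddCommGroup Matrix.linftyOpNormedRing
  Matrix.linftyOpNormedAlgebra Matrix.linftyOpNormedSpace Matrix.linftyOpIsBoundedSMul

/-- Gelfand-type eventual bound: if every spectral value of `A` has norm `< r`, then
eventually `‖A ^ t‖₊ < r ^ t`. -/
lemma aux_eventually_norm_pow_lt {ι : Type} [Fintype ι] [DecidableEq ι] [Nonempty ι]
    (A : Matrix ι ι ℂ) (r : ℝ≥0) (h : ∀ z ∈ spectrum ℂ A, ‖z‖₊ < r) :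
    ∀ᶠ t in atTop, ‖A ^ t‖₊ < r ^ t := by
  haveI : CompleteSpace (Matrix ι ι ℂ) := FiniteDimensional.complete ℂ _
  have hρ : spectralRadius ℂ A < (r : ℝ≥0∞) := by
    have hne : (spectrum ℂ A).Nonempty := spectrum.nonempty A
    exact spectrum.spectralRadius_lt_of_forall_lt_of_nonempty hne h
  have hlim := spectrum.limsup_pow_nnnorm_pow_one_div_le_spectralRadius A
  have hev : ∀ᶠ t : ℕ in atTop, ((‖A ^ t‖₊ : ℝ≥0∞)) ^ (1 / (t : ℝ)) < (r : ℝ≥0∞) :=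
    Filter.eventually_lt_of_limsup_lt (lt_of_le_of_lt hlim hρ)
  filter_upwards [hev, Filter.eventually_ge_atTop 1] with t h1 h2
  have ht : (t : ℝ) ≠ 0 := by positivity
  have := ENNReal.rpow_lt_rpow h1 (by positivity : (0:ℝ) < (t:ℝ))
  rw [← ENNReal.rpow_mul, one_div,
    inv_mul_cancel₀ ht, ENNReal.rpow_one, ENNReal.rpow_natCast, ← ENNReal.coe_pow,
    ENNReal.coe_lt_coe] at this
  exact this

lemma aux_kron_nnnorm_le {a b c e : Type} [Fintype a] [Fintype b] [Fintype c] [Fintype e]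
    (A : Matrix a b ℝ) (B : Matrix c e ℝ) : ‖A ⊗ₖ B‖₊ ≤ ‖A‖₊ * ‖B‖₊ := by
  rw [Matrix.linfty_opNNNorm_def]
  refine Finset.sup_le fun p _ => ?_
  calc ∑ q : b × e, ‖(A ⊗ₖ B) p q‖₊
      = (∑ j : b, ‖A p.1 j‖₊) * (∑ q : e, ‖B p.2 q‖₊) := by
        rw [Finset.sum_mul_sum, Fintype.sum_prod_type]
        simp [Matrix.kroneckerMap_apply, nnnorm_mul]
    _ ≤ ‖A‖₊ * ‖B‖₊ := by
        refine mul_le_mul' ?_ ?_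
        · rw [Matrix.linfty_opNNNorm_def]
          exact Finset.le_sup (f := fun i => ∑ j : b, ‖A i j‖₊) (Finset.mem_univ p.1)
        · rw [Matrix.linfty_opNNNorm_def]
          exact Finset.le_sup (f := fun i => ∑ j : e, ‖B i j‖₊) (Finset.mem_univ p.2)

lemma aux_kron_pow {a c : Type} [Fintype a] [Fintype c] [DecidableEq a] [DecidableEq c]
    (A : Matrix a a ℝ) (B : Matrix c c ℝ) (t : ℕ) : (A ⊗ₖ B) ^ t = (A ^ t) ⊗ₖ (B ^ t) := by
  induction t with
  | zero => simp [Matrix.one_kronecker_one]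
  | succ n ih => rw [pow_succ, pow_succ, pow_succ, ih, ← Matrix.mul_kronecker_mul]

lemma aux_kron_mulVec {R : Type} [CommRing R] {a b c e : Type} [Fintype a] [Fintype b] [Fintype c]
    [Fintype e] (A : Matrix a b R) (B : Matrix c e R) (x : b → R) (y : e → R) :
    (A ⊗ₖ B) *ᵥ (fun p => x p.1 * y p.2) = fun p => (A *ᵥ x) p.1 * (B *ᵥ y) p.2 := by
  funext p
  simp only [Matrix.mulVec, dotProduct, Matrix.kroneckerMap_apply,
    Fintype.sum_prod_type, Finset.sum_mul_sum]
  exact Finset.sum_congr rfl fun i _ => Finset.sum_congr rfl fun j _ => by ring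

lemma aux_nontrivial {n : Type} [Fintype n] [DecidableEq n] [Nonempty n] :
    Nontrivial (Matrix n n ℂ) := by
  obtain ⟨i⟩ := ‹Nonempty n›
  exact ⟨0, 1, fun h => by simpa using congrFun (congrFun h i) i⟩

lemma aux_spec_iff {n : Type} [Fintype n] [DecidableEq n] [Nonempty n]
    (Lc : Matrix n n ℂ) {k : ℂ} (hk : k ≠ 0) (ν : ℂ) :
    ν ∈ spectrum ℂ ((1 : Matrix n n ℂ) - k • Lc) ↔ (1 - ν) / k ∈ spectrum ℂ Lc := by
  rw [spectrum.mem_iff, spectrum.mem_iff]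
  have hEq : algebraMap ℂ (Matrix n n ℂ) ν - ((1 : Matrix n n ℂ) - k • Lc)
      = (-k) • (algebraMap ℂ (Matrix n n ℂ) ((1 - ν) / k) - Lc) := by
    have h2 : (-k) * ((1 - ν) / k) = ν - 1 := by field_simp; ring
    rw [Algebra.algebraMap_eq_smul_one, Algebra.algebraMap_eq_smul_one, smul_sub, smul_smul, h2]
    module
  rw [hEq]
  have hu : IsUnit (algebraMap ℂ (Matrix n n ℂ) (-k)) :=
    (isUnit_iff_ne_zero.mpr (neg_ne_zero.mpr hk)).map _
  have : (-k) • (algebraMap ℂ (Matrix n n ℂ) ((1 - ν) / k) - Lc)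
      = hu.unit * (algebraMap ℂ (Matrix n n ℂ) ((1 - ν) / k) - Lc) := by
    rw [IsUnit.unit_spec, ← Algebra.smul_def]
  rw [this, Units.isUnit_units_mul]

lemma aux_spec_fwd {n : Type} [Fintype n] [DecidableEq n] [Nonempty n]
    (Lc : Matrix n n ℂ) (k μ : ℂ) (hμ : μ ∈ spectrum ℂ Lc) :
    1 - k * μ ∈ spectrum ℂ ((1 : Matrix n n ℂ) - k • Lc) := by
  haveI := aux_nontrivial (n := n)
  rcases eq_or_ne k 0 with rfl | hk
  · simp only [zero_mul, sub_zero, zero_smul]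
    rw [spectrum.one_eq]
    exact Set.mem_singleton 1
  · rw [aux_spec_iff Lc hk]
    have : (1 - (1 - k * μ)) / k = μ := by field_simp; ring
    rwa [this]

lemma aux_eigvec {n : Type} [Fintype n] [DecidableEq n]
    (A : Matrix n n ℂ) (ν : ℂ) (h : ν ∈ spectrum ℂ A) :
    ∃ v : n → ℂ, v ≠ 0 ∧ A *ᵥ v = ν • v := by
  rw [spectrum.mem_iff] at h
  rw [Matrix.isUnit_iff_isUnit_det, isUnit_iff_ne_zero, ne_eq, not_not] at h
  obtain ⟨v, hv, hv0⟩ := (Matrix.exists_mulVec_eq_zero_iff).mpr h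
  refine ⟨v, hv, ?_⟩
  have := hv0
  rw [Matrix.sub_mulVec, sub_eq_zero] at this
  rw [← this, Algebra.algebraMap_eq_smul_one, Matrix.smul_mulVec, Matrix.one_mulVec]

lemma aux_spec_jordan (lam : ℝ) (d : ℕ) (z : ℂ)
    (hz : z ∈ spectrum ℂ ((jordanBlock lam d).map Complex.ofReal)) : z = (lam : ℂ) := by
  rw [spectrum.mem_iff] at hz
  set M := algebraMap ℂ (Matrix (Fin d) (Fin d) ℂ) z - (jordanBlock lam d).map Complex.ofReal with hM
  have htri : M.BlockTriangular id := by
    intro i j hij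
    have hij' : (j : ℕ) < (i : ℕ) := hij
    have hne : i ≠ j := by intro h; subst h; omega
    have h2 : (i : ℕ) + 1 ≠ (j : ℕ) := by omega
    simp [hM, jordanBlock, algebraMap_matrix_apply, hne, h2]
  have hdet : M.det = 0 := by
    by_contra hne
    exact hz ((Matrix.isUnit_iff_isUnit_det M).mpr (isUnit_iff_ne_zero.mpr hne))
  rw [Matrix.det_of_upperTriangular htri] at hdet
  have hdiag : ∀ i : Fin d, M i i = z - lam := by
    intro i
    simp [hM, jordanBlock, algebraMap_matrix_apply]
  rw [Finset.prod_congr rfl (fun i _ => hdiag i)] at hdet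
  rcases Finset.prod_eq_zero_iff.mp hdet with ⟨i, _, h⟩
  exact sub_eq_zero.mp h

lemma aux_map_pow {n : Type} [Fintype n] [DecidableEq n] (A : Matrix n n ℝ) (t : ℕ) :
    (A ^ t).map Complex.ofReal = (A.map Complex.ofReal) ^ t := by
  have h : ∀ B : Matrix n n ℝ, B.map Complex.ofReal = Complex.ofRealHom.mapMatrix B := fun _ => rfl
  rw [h, h, map_pow]

lemma aux_map_nnnorm {m n : Type} [Fintype m] [Fintype n] (A : Matrix m n ℝ) :
    ‖A.map Complex.ofReal‖₊ = ‖A‖₊ := by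
  rw [Matrix.linfty_opNNNorm_def, Matrix.linfty_opNNNorm_def]
  congr 1; funext i; congr 1; funext j
  simp [Matrix.map_apply]

lemma aux_map_oneSub {n : Type} [Fintype n] [DecidableEq n] (L : Matrix n n ℝ) (k : ℝ) :
    ((1 : Matrix n n ℝ) - k • L).map Complex.ofReal
      = (1 : Matrix n n ℂ) - (k : ℂ) • L.map Complex.ofReal := by
  ext i j
  simp only [Matrix.map_apply, Matrix.sub_apply, Matrix.smul_apply, Matrix.one_apply]
  split_ifs <;> simp [smul_eq_mul]

lemma aux_kron_map {a b c e : Type} [Fintype a] [Fintype b] [Fintype c] [Fintype e]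
    (A : Matrix a b ℝ) (B : Matrix c e ℝ) :
    (A ⊗ₖ B).map Complex.ofReal = (A.map Complex.ofReal) ⊗ₖ (B.map Complex.ofReal) := by
  ext p q
  simp [Matrix.map_apply, Matrix.kroneckerMap_apply]

lemma aux_jordan_vec (lam : ℝ) (d : ℕ) (hd : 1 ≤ d) :
    ((jordanBlock lam d).map Complex.ofReal) *ᵥ (fun j : Fin d => if (j : ℕ) = 0 then (1:ℂ) else 0)
      = (lam : ℂ) • fun j : Fin d => if (j : ℕ) = 0 then (1:ℂ) else 0 := by
  funext j
  simp only [Matrix.mulVec, dotProduct, Pi.smul_apply, smul_eq_mul]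
  rw [Finset.sum_eq_single (⟨0, hd⟩ : Fin d)]
  · simp only [Matrix.map_apply, jordanBlock, Matrix.of_apply]
    by_cases hj : (j : ℕ) = 0
    · have : j = ⟨0, hd⟩ := by ext; simpa using hj
      simp [this]
    · have h1 : j ≠ ⟨0, hd⟩ := fun h => hj (by simp [h])
      have h2 : (j : ℕ) + 1 ≠ ((⟨0, hd⟩ : Fin d) : ℕ) := by simp
      simp [h1, h2, hj]
  · intro b _ hb
    have : (b : ℕ) ≠ 0 := fun h => hb (by ext; simpa using h)
    simp [this]
  · simp


lemma aux_spec_nonempty {n : Type} [Fintype n] [DecidableEq n] [Nonempty n]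
    (A : Matrix n n ℂ) : (spectrum ℂ A).Nonempty := by
  haveI : CompleteSpace (Matrix n n ℂ) := FiniteDimensional.complete ℂ _
  haveI := aux_nontrivial (n := n)
  exact spectrum.nonempty A

lemma aux_exists_max {n : Type} [Fintype n] [DecidableEq n] [Nonempty n]
    (A : Matrix n n ℂ) : ∃ z₀ ∈ spectrum ℂ A, ∀ z ∈ spectrum ℂ A, ‖z‖ ≤ ‖z₀‖ := by
  haveI : CompleteSpace (Matrix n n ℂ) := FiniteDimensional.complete ℂ _
  haveI := aux_nontrivial (n := n)
  obtain ⟨z₀, hz₀, hmax⟩ := spectrum.exists_nnnorm_eq_spectralRadius A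
  refine ⟨z₀, hz₀, fun z hz => ?_⟩
  have h1 : (‖z‖₊ : ℝ≥0∞) ≤ spectralRadius ℂ A := le_iSup₂ (f := fun k (_ : k ∈ spectrum ℂ A) => (‖k‖₊ : ℝ≥0∞)) z hz
  rw [← hmax] at h1
  exact_mod_cast h1

lemma aux_tendsto {N d : ℕ} [NeZero N] [NeZero d]
    (M : Matrix (Fin N) (Fin N) ℝ) (J : Matrix (Fin d) (Fin d) ℝ)
    (c : ℝ) (hc0 : 0 ≤ c) (hc1 : c < 1)
    (rM rJ : ℝ≥0) (hrr : (rM : ℝ) * (rJ : ℝ) ≤ c)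
    (hM : ∀ z ∈ spectrum ℂ (M.map Complex.ofReal), ‖z‖₊ < rM)
    (hJ : ∀ z ∈ spectrum ℂ (J.map Complex.ofReal), ‖z‖₊ < rJ)
    (e₀ : Fin N × Fin d → ℝ) :
    Filter.Tendsto (fun t : ℕ => ((M ⊗ₖ J) ^ t) *ᵥ e₀) Filter.atTop (nhds 0) := by
  have hMev := aux_eventually_norm_pow_lt (M.map Complex.ofReal) rM hM
  have hJev := aux_eventually_norm_pow_lt (J.map Complex.ofReal) rJ hJ
  refine squeeze_zero_norm' ?_
    (by simpa using (tendsto_pow_atTop_nhds_zero_of_lt_one hc0 hc1).mul_const ‖e₀‖)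
  filter_upwards [hMev, hJev] with t h1 h2
  rw [← aux_map_pow, aux_map_nnnorm] at h1 h2
  have hkron : ‖(M ⊗ₖ J) ^ t‖₊ ≤ ‖M ^ t‖₊ * ‖J ^ t‖₊ := by
    rw [aux_kron_pow]; exact aux_kron_nnnorm_le _ _
  have hle : ‖(M ⊗ₖ J) ^ t‖₊ ≤ rM ^ t * rJ ^ t :=
    hkron.trans (mul_le_mul' h1.le h2.le)
  calc ‖((M ⊗ₖ J) ^ t) *ᵥ e₀‖ ≤ ‖(M ⊗ₖ J) ^ t‖ * ‖e₀‖ := Matrix.linfty_opNorm_mulVec _ _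
    _ ≤ ((rM : ℝ) ^ t * (rJ : ℝ) ^ t) * ‖e₀‖ := by
        apply mul_le_mul_of_nonneg_right _ (norm_nonneg _)
        exact_mod_cast hle
    _ ≤ c ^ t * ‖e₀‖ := by
        apply mul_le_mul_of_nonneg_right _ (norm_nonneg _)
        rw [← mul_pow]
        exact pow_le_pow_left₀ (by positivity) hrr t

end Aux

theorem stmt11 (lam : ℝ) (hlam : 1 ≤ |lam|) (d : ℕ) (hd : 1 ≤ d)
    (N : ℕ) (hN : 1 ≤ N) (L : Matrix (Fin N) (Fin N) ℝ) (k : ℝ)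
    (Φ : Matrix (Fin N × Fin d) (Fin N × Fin d) ℝ)
    (hΦ : Φ = ((1 : Matrix (Fin N) (Fin N) ℝ) - k • L) ⊗ₖ jordanBlock lam d) :
    (∀ e₀ : Fin N × Fin d → ℝ,
        Filter.Tendsto (fun t : ℕ => (Φ ^ t) *ᵥ e₀) Filter.atTop (nhds 0)) ↔
      ∀ μ ∈ spectrum ℂ (L.map Complex.ofReal),
        ‖(1 - (k : ℂ) * μ)‖ < 1 / |lam| := by
  haveI : NeZero N := ⟨by omega⟩
  haveI : NeZero d := ⟨by omega⟩
  haveI : Nonempty (Fin N) := ⟨⟨0, hN⟩⟩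
  haveI : Nonempty (Fin d) := ⟨⟨0, hd⟩⟩
  have hlam0 : (0 : ℝ) < |lam| := lt_of_lt_of_le one_pos hlam
  set Lc := L.map Complex.ofReal with hLc
  constructor
  · -- convergence implies spectral condition
    intro h μ hμ
    set ν : ℂ := 1 - (k : ℂ) * μ with hνdef
    have hν : ν ∈ spectrum ℂ ((1 : Matrix (Fin N) (Fin N) ℂ) - (k : ℂ) • Lc) :=
      aux_spec_fwd Lc _ μ hμ
    obtain ⟨v, hv, hvec⟩ := aux_eigvec _ _ hν
    set u : Fin d → ℂ := fun j => if (j : ℕ) = 0 then (1 : ℂ) else 0 with hu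
    set w : Fin N × Fin d → ℂ := fun p => v p.1 * u p.2 with hw
    have hΦc : Φ.map Complex.ofReal
        = ((1 : Matrix (Fin N) (Fin N) ℂ) - (k : ℂ) • Lc) ⊗ₖ
          ((jordanBlock lam d).map Complex.ofReal) := by
      rw [hΦ, aux_kron_map, aux_map_oneSub]
    have hstep : (Φ.map Complex.ofReal) *ᵥ w = (ν * (lam : ℂ)) • w := by
      rw [hΦc, hw, aux_kron_mulVec]
      funext p
      rw [hvec, aux_jordan_vec lam d hd]
      simp only [Pi.smul_apply, smul_eq_mul]
      ring
    have hpow : ∀ t : ℕ, ((Φ.map Complex.ofReal) ^ t) *ᵥ w = ((ν * (lam : ℂ)) ^ t) • w := by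
      intro t
      induction t with
      | zero => simp
      | succ n ih =>
        rw [pow_succ', ← Matrix.mulVec_mulVec, ih, Matrix.mulVec_smul, hstep, smul_smul,
          ← pow_succ]
    obtain ⟨i₀, hi₀⟩ := Function.ne_iff.mp hv
    set p₀ : Fin N × Fin d := (i₀, ⟨0, hd⟩) with hp₀
    have hwp : w p₀ ≠ 0 := by
      simp only [hw, hp₀, hu]
      simpa using hi₀
    set rw' : Fin N × Fin d → ℝ := fun p => (w p).re with hrw
    set iw : Fin N × Fin d → ℝ := fun p => (w p).im with hiw
    have key : ∀ t : ℕ, ((ν * (lam : ℂ)) ^ t) * w p₀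
        = ((Φ ^ t *ᵥ rw') p₀ : ℝ) + ((Φ ^ t *ᵥ iw) p₀ : ℝ) * Complex.I := by
      intro t
      have h1 : ((ν * (lam : ℂ)) ^ t) * w p₀ = (((Φ ^ t).map Complex.ofReal) *ᵥ w) p₀ := by
        rw [aux_map_pow, hpow t]
        simp [Pi.smul_apply, smul_eq_mul]
      rw [h1]
      show (∑ q, (((Φ ^ t) p₀ q : ℝ) : ℂ) * w q) = _
      calc (∑ q, (((Φ ^ t) p₀ q : ℝ) : ℂ) * w q)
          = ∑ q, ((((Φ ^ t) p₀ q * (w q).re : ℝ) : ℂ)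
              + (((Φ ^ t) p₀ q * (w q).im : ℝ) : ℂ) * Complex.I) := by
            refine Finset.sum_congr rfl fun q _ => ?_
            have hq : w q = ((w q).re : ℂ) + ((w q).im : ℂ) * Complex.I :=
              (Complex.re_add_im _).symm
            conv_lhs => rw [hq]
            push_cast
            ring
        _ = ((∑ q, (Φ ^ t) p₀ q * (w q).re : ℝ) : ℂ)
              + ((∑ q, (Φ ^ t) p₀ q * (w q).im : ℝ) : ℂ) * Complex.I := by
            rw [Finset.sum_add_distrib, ← Finset.sum_mul]
            push_cast
            ring
        _ = _ := by
            rfl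
    have h1 := tendsto_pi_nhds.mp (h rw') p₀
    have h2 := tendsto_pi_nhds.mp (h iw) p₀
    have hz : Filter.Tendsto (fun t : ℕ => ((ν * (lam : ℂ)) ^ t) * w p₀)
        Filter.atTop (nhds 0) := by
      have ht : Filter.Tendsto (fun t : ℕ => (((Φ ^ t *ᵥ rw') p₀ : ℝ) : ℂ)
          + (((Φ ^ t *ᵥ iw) p₀ : ℝ) : ℂ) * Complex.I) Filter.atTop (nhds 0) := by
        have hr := (Complex.continuous_ofReal.tendsto _).comp h1
        have hi := ((Complex.continuous_ofReal.tendsto _).comp h2).mul_const Complex.I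
        simpa using hr.add hi
      exact ht.congr fun t => (key t).symm
    have hz2 : Filter.Tendsto (fun t : ℕ => (ν * (lam : ℂ)) ^ t) Filter.atTop (nhds 0) := by
      have := hz.mul_const (w p₀)⁻¹
      simp only [mul_assoc, mul_inv_cancel₀ hwp, mul_one, zero_mul] at this
      exact this
    have hnorm : ‖ν * (lam : ℂ)‖ < 1 := by
      have h3 : Filter.Tendsto (fun t : ℕ => ‖ν * (lam : ℂ)‖ ^ t) Filter.atTop (nhds 0) := by
        have := hz2.norm
        simpa [norm_pow] using this
      have h4 := tendsto_pow_atTop_nhds_zero_iff.mp h3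
      rwa [abs_of_nonneg (norm_nonneg _)] at h4
    have h5 : ‖ν * (lam : ℂ)‖ = ‖ν‖ * |lam| := by
      rw [norm_mul, Complex.norm_real, Real.norm_eq_abs]
    rw [h5] at hnorm
    rw [lt_div_iff₀ hlam0]
    exact hnorm
  · -- spectral condition implies convergence
    intro h e₀
    subst hΦ
    set Mc := (1 : Matrix (Fin N) (Fin N) ℂ) - (k : ℂ) • Lc with hMc
    obtain ⟨μ₀, hμ₀⟩ := aux_spec_nonempty Lc
    have hb : ∀ z ∈ spectrum ℂ Mc, ‖z‖ * |lam| < 1 := by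
      intro z hz
      rcases eq_or_ne k 0 with hk | hk
      · exfalso
        have := h μ₀ hμ₀
        rw [hk] at this
        simp only [Complex.ofReal_zero, zero_mul, sub_zero] at this
        rw [show ‖(1:ℂ)‖ = 1 from norm_one] at this
        have h1 : 1 / |lam| ≤ 1 := div_le_one_of_le₀ hlam (abs_nonneg lam)
        linarith
      · have hk' : (k : ℂ) ≠ 0 := Complex.ofReal_ne_zero.mpr hk
        have hμ : (1 - z) / k ∈ spectrum ℂ Lc := (aux_spec_iff Lc hk' z).mp hz
        have := h _ hμ
        have heq : 1 - (k : ℂ) * ((1 - z) / k) = z := by field_simp; ring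
        rw [heq] at this
        rw [lt_div_iff₀ hlam0] at this
        exact this
    obtain ⟨z₀, hz₀mem, hz₀max⟩ := aux_exists_max Mc
    set a : ℝ := ‖z₀‖ with ha
    have ha0 : 0 ≤ a := norm_nonneg _
    have hal : a * |lam| < 1 := by
      have := hb z₀ hz₀mem
      exact this
    set ε : ℝ := (1 - a * |lam|) / (2 * (a + |lam| + 1)) with hε
    have hεpos : 0 < ε := by
      apply div_pos (by linarith)
      positivity
    have hεhalf : ε ≤ 1 / 2 := by
      rw [hε, div_le_div_iff₀ (by positivity) (by norm_num)]
      nlinarith [mul_nonneg ha0 (abs_nonneg lam)]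
    have hεid : ε * (2 * (a + |lam| + 1)) = 1 - a * |lam| := by
      rw [hε]
      field_simp
    have hc1 : (a + ε) * (|lam| + ε) < 1 := by
      nlinarith [mul_pos hεpos hεpos, mul_nonneg ha0 hεpos.le]
    refine aux_tendsto _ _ ((a + ε) * (|lam| + ε)) (by positivity) hc1
      ⟨a + ε, by positivity⟩ ⟨|lam| + ε, by positivity⟩ le_rfl ?_ ?_ e₀
    · intro z hz
      rw [aux_map_oneSub, ← hLc, ← hMc] at hz
      apply NNReal.coe_lt_coe.mp
      have := hz₀max z hz
      simp only [coe_nnnorm, NNReal.coe_mk]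
      show _ < a + ε
      linarith
    · intro z hz
      have := aux_spec_jordan lam d z hz
      apply NNReal.coe_lt_coe.mp
      simp only [coe_nnnorm, NNReal.coe_mk, this, Complex.norm_real, Real.norm_eq_abs]
      show _ < |lam| + ε
      linarith
end
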